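/- For every binary image S on an h×w grid, the component graph of S — the simple graph whose vertex set is the disjoint union of the connected components of the foreground F(S) and the connected components of the background ℝ² \ F(S), in which a foreground component F_i is adjacent to a background component B_j if and only if F_i ∩ closure(B_j) ≠ ∅, and in which no two foreground components are adjacent and no two background components are adjacent — is a tree, i.e. it is connected and acyclic. -/

import Mathlib

open Set Metric

noncomputable section

/-- The plane modeled as `Fin 2 → ℝ` with the Pi (sup) norm. -/
abbrev Plane : Type := Fin 2 → ℝ

/-- The Euclidean plane (for Euclidean-norm disks and annuli). -/
abbrev EPlane : Type := EuclideanSpace ℝ (Fin 2)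

/-- The closed unit pixel `[i-1,i] × [j-1,j]` for a pixel index `(i,j)`. -/
def pixel (p : ℕ × ℕ) : Set Plane :=
  {x | x 0 ∈ Set.Icc ((p.1 : ℝ) - 1) (p.1 : ℝ) ∧ x 1 ∈ Set.Icc ((p.2 : ℝ) - 1) (p.2 : ℝ)}

/-- A binary image `S` lies on the `h × w` grid `{1,…,h} × {1,…,w}`. -/
def OnGrid (S : Set (ℕ × ℕ)) (h w : ℕ) : Prop :=
  S ⊆ Set.Icc 1 h ×ˢ Set.Icc 1 w

/-- The foreground `F(S)` of a binary image. -/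
def fg (S : Set (ℕ × ℕ)) : Set Plane := ⋃ p ∈ S, pixel p

/-- Closed `ε`-thickening `D_ε(X)` with respect to the sup norm. -/
def thick (ε : ℝ) (X : Set Plane) : Set Plane := {y | ∃ x ∈ X, ‖x - y‖ ≤ ε}

/-- `C` is a connected component of `A` (as a subset of the plane). -/
def IsCompOf (C A : Set Plane) : Prop := ∃ x ∈ A, C = connectedComponentIn A x

/-- Two subsets share a boundary edge if their closures intersect in an infinite set. -/
def SharesEdge (C D : Set Plane) : Prop := (closure C ∩ closure D).Infinite

/-- `X` strongly deformation retracts onto `A`. -/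
def SDR (X A : Set Plane) : Prop :=
  ∃ H : C(↥X × unitInterval, ↥X),
    (∀ x, H (x, 0) = x) ∧ (∀ x, ((H (x, 1) : Plane)) ∈ A) ∧
    (∀ a : ↥X, (a : Plane) ∈ A → ∀ t, H (a, t) = a)

def TPset (P G : Set (ℕ × ℕ)) (ε : ℝ) : Set Plane := thick ε (fg P) ∩ thick (2 * ε) (fg G)
def TNset (P G : Set (ℕ × ℕ)) (ε : ℝ) : Set Plane := (thick ε (fg P))ᶜ ∩ (thick (2 * ε) (fg G))ᶜ
def FPset (P G : Set (ℕ × ℕ)) (ε : ℝ) : Set Plane := thick ε (fg P) ∩ (thick (2 * ε) (fg G))ᶜ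
def FNset (P G : Set (ℕ × ℕ)) (ε : ℝ) : Set Plane := (thick ε (fg P))ᶜ ∩ thick (2 * ε) (fg G)

/-- A component `C` (of `FP` or `FN`) is regular: exactly one component of `TP` and exactly
one component of `TN` share a boundary edge with it. -/
def RegularComp (P G : Set (ℕ × ℕ)) (ε : ℝ) (C : Set Plane) : Prop :=
  (∃! T : Set Plane, IsCompOf T (TPset P G ε) ∧ SharesEdge T C) ∧
  (∃! T : Set Plane, IsCompOf T (TNset P G ε) ∧ SharesEdge T C)

/-- The zero-loss hypothesis: every component of `FP` and every component of `FN` is regular. -/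
def ZeroLoss (P G : Set (ℕ × ℕ)) (ε : ℝ) : Prop :=
  (∀ C : Set Plane, IsCompOf C (FPset P G ε) → RegularComp P G ε C) ∧
  (∀ C : Set Plane, IsCompOf C (FNset P G ε) → RegularComp P G ε C)

/-- The component graph of a binary image `S`: vertices are the connected components of the
foreground `F(S)` and of the background `ℝ² \ F(S)`; a foreground component `F_i` is adjacent
to a background component `B_j` iff `F_i ∩ closure B_j ≠ ∅`; no two foreground components and
no two background components are adjacent. -/
def componentGraph (S : Set (ℕ × ℕ)) :
    SimpleGraph ({C : Set Plane // IsCompOf C (fg S)} ⊕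
                 {C : Set Plane // IsCompOf C ((fg S)ᶜ)}) where
  Adj v w :=
    match v, w with
    | Sum.inl F, Sum.inr B => (F.1 ∩ closure B.1).Nonempty
    | Sum.inr B, Sum.inl F => (F.1 ∩ closure B.1).Nonempty
    | _, _ => False
  symm := by
    constructor
    rintro (F | B) (F' | B') hadj
    · exact hadj.elim
    · exact hadj
    · exact hadj
    · exact hadj.elim
  loopless := by
    constructor
    rintro (F | B) hadj
    · exact hadj
    · exact hadj

namespace CGT

/-! ### §1 Basic cell geometry -/

abbrev Cell := ℤ × ℤ

/-- The closed unit pixel for an integer cell. -/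
def pixZ (z : Cell) : Set Plane :=
  {x | x 0 ∈ Set.Icc ((z.1 : ℝ) - 1) (z.1 : ℝ) ∧ x 1 ∈ Set.Icc ((z.2 : ℝ) - 1) (z.2 : ℝ)}

def cellsOf (S : Set (ℕ × ℕ)) : Set Cell := (fun p : ℕ × ℕ => ((p.1 : ℤ), (p.2 : ℤ))) '' S

theorem fg_eq_iUnion (S : Set (ℕ × ℕ)) : fg S = ⋃ z ∈ cellsOf S, pixZ z := by
  unfold fg cellsOf pixel pixZ
  ext x
  simp only [Set.mem_iUnion, Set.mem_image, exists_prop, Set.mem_setOf_eq]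
  constructor
  · rintro ⟨p, hp, h0, h1⟩
    exact ⟨((p.1 : ℤ), (p.2 : ℤ)), ⟨p, hp, rfl⟩, by push_cast; exact h0, by push_cast; exact h1⟩
  · rintro ⟨z, ⟨p, hp, rfl⟩, h0, h1⟩
    exact ⟨p, hp, by push_cast at h0 ⊢; exact h0, by push_cast at h1 ⊢; exact h1⟩

theorem isClosed_pixZ (z : Cell) : IsClosed (pixZ z) := by
  have : pixZ z = (fun x : Plane => x 0) ⁻¹' Set.Icc ((z.1 : ℝ) - 1) (z.1 : ℝ) ∩
      (fun x : Plane => x 1) ⁻¹' Set.Icc ((z.2 : ℝ) - 1) (z.2 : ℝ) := rfl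
  rw [this]
  exact ((isClosed_Icc.preimage (continuous_apply 0)).inter
    (isClosed_Icc.preimage (continuous_apply 1)))

theorem convex_pixZ (z : Cell) : Convex ℝ (pixZ z) := by
  intro x hx y hy a b ha hb hab
  constructor
  · have := (convex_Icc ((z.1 : ℝ) - 1) (z.1 : ℝ)) hx.1 hy.1 ha hb hab
    simpa using this
  · have := (convex_Icc ((z.2 : ℝ) - 1) (z.2 : ℝ)) hx.2 hy.2 ha hb hab
    simpa using this

theorem isPreconnected_pixZ (z : Cell) : IsPreconnected (pixZ z) :=
  (convex_pixZ z).isPreconnected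

/-- The center of a cell. -/
def ctr (z : Cell) : Plane := fun i => if i = 0 then (z.1 : ℝ) - 1/2 else (z.2 : ℝ) - 1/2

/-- Strictly inside a pixel. -/
def SIn (x : Plane) (z : Cell) : Prop :=
  ((z.1 : ℝ) - 1 < x 0 ∧ x 0 < z.1) ∧ ((z.2 : ℝ) - 1 < x 1 ∧ x 1 < z.2)

theorem SIn.mem_pixZ {x : Plane} {z : Cell} (h : SIn x z) : x ∈ pixZ z :=
  ⟨⟨le_of_lt h.1.1, le_of_lt h.1.2⟩, ⟨le_of_lt h.2.1, le_of_lt h.2.2⟩⟩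

theorem SIn.eq_of_mem_pixZ {x : Plane} {z w : Cell} (h : SIn x z) (h' : x ∈ pixZ w) : w = z := by
  obtain ⟨⟨h1, h2⟩, ⟨h3, h4⟩⟩ := h
  obtain ⟨⟨g1, g2⟩, ⟨g3, g4⟩⟩ := h'
  have e1 : w.1 = z.1 := by
    have a1 : (w.1 : ℝ) < z.1 + 1 := by linarith
    have a2 : (z.1 : ℝ) < w.1 + 1 := by linarith
    have b1 : w.1 < z.1 + 1 := by exact_mod_cast a1
    have b2 : z.1 < w.1 + 1 := by exact_mod_cast a2
    omega
  have e2 : w.2 = z.2 := by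
    have a1 : (w.2 : ℝ) < z.2 + 1 := by linarith
    have a2 : (z.2 : ℝ) < w.2 + 1 := by linarith
    have b1 : w.2 < z.2 + 1 := by exact_mod_cast a1
    have b2 : z.2 < w.2 + 1 := by exact_mod_cast a2
    omega
  exact Prod.ext e1 e2

theorem sin_ctr (z : Cell) : SIn (ctr z) z := by
  unfold ctr SIn
  norm_num

/-- Points on the segment from a pixel point to the center are strictly inside. -/
theorem sin_combo {y : Plane} {z : Cell} (hy : y ∈ pixZ z) {t : ℝ} (ht0 : 0 < t) (ht1 : t ≤ 1) :
    SIn ((1 - t) • y + t • ctr z) z := by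
  obtain ⟨⟨a1, a2⟩, ⟨a3, a4⟩⟩ := hy
  have hctr0 : (ctr z) 0 = (z.1 : ℝ) - 1/2 := by simp [ctr]
  have hctr1 : (ctr z) 1 = (z.2 : ℝ) - 1/2 := by simp [ctr]
  have e0 : ((1 - t) • y + t • ctr z) 0 = (1 - t) * y 0 + t * ((z.1 : ℝ) - 1/2) := by
    simp [hctr0]
  have e1 : ((1 - t) • y + t • ctr z) 1 = (1 - t) * y 1 + t * ((z.2 : ℝ) - 1/2) := by
    simp [hctr1]
  constructor
  · rw [e0]; constructor <;> nlinarith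
  · rw [e1]; constructor <;> nlinarith

/-- Every point lies in some pixel. -/
theorem exists_cell (x : Plane) : ∃ z : Cell, x ∈ pixZ z := by
  refine ⟨(⌈x 0⌉, ⌈x 1⌉), ⟨⟨?_, Int.le_ceil _⟩, ⟨?_, Int.le_ceil _⟩⟩⟩
  · push_cast; linarith [Int.ceil_lt_add_one (x 0)]
  · push_cast; linarith [Int.ceil_lt_add_one (x 1)]

/-- Pixels of cells intersect iff the cells are within Chebyshev distance 1. -/
theorem pix_inter_iff {z w : Cell} :
    (pixZ z ∩ pixZ w).Nonempty ↔ |z.1 - w.1| ≤ 1 ∧ |z.2 - w.2| ≤ 1 := by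
  constructor
  · rintro ⟨x, ⟨⟨a1, a2⟩, ⟨a3, a4⟩⟩, ⟨⟨b1, b2⟩, ⟨b3, b4⟩⟩⟩
    have c1 : (z.1 : ℝ) ≤ w.1 + 1 := by linarith
    have c2 : (w.1 : ℝ) ≤ z.1 + 1 := by linarith
    have c3 : (z.2 : ℝ) ≤ w.2 + 1 := by linarith
    have c4 : (w.2 : ℝ) ≤ z.2 + 1 := by linarith
    have d1 : z.1 ≤ w.1 + 1 := by exact_mod_cast c1
    have d2 : w.1 ≤ z.1 + 1 := by exact_mod_cast c2
    have d3 : z.2 ≤ w.2 + 1 := by exact_mod_cast c3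
    have d4 : w.2 ≤ z.2 + 1 := by exact_mod_cast c4
    constructor <;> rw [abs_le] <;> omega
  · rintro ⟨h1, h2⟩
    rw [abs_le] at h1 h2
    refine ⟨fun i => if i = 0 then (min z.1 w.1 : ℝ) else (min z.2 w.2 : ℝ), ⟨⟨?_, ?_⟩, ?_, ?_⟩, ⟨⟨?_, ?_⟩, ?_, ?_⟩⟩ <;>
      simp only [if_pos rfl, if_neg (by norm_num : (1 : Fin 2) ≠ 0)] <;>
      push_cast <;>
      [skip; skip; skip; skip; skip; skip; skip; skip]
    · have : (w.1 : ℝ) ≥ z.1 - 1 := by exact_mod_cast (by omega : w.1 ≥ z.1 - 1)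
      rcases min_cases (z.1 : ℝ) (w.1 : ℝ) with ⟨e, _⟩ | ⟨e, _⟩ <;> rw [e] <;> linarith
    · exact min_le_left _ _
    · have : (w.2 : ℝ) ≥ z.2 - 1 := by exact_mod_cast (by omega : w.2 ≥ z.2 - 1)
      rcases min_cases (z.2 : ℝ) (w.2 : ℝ) with ⟨e, _⟩ | ⟨e, _⟩ <;> rw [e] <;> linarith
    · exact min_le_left _ _
    · have : (z.1 : ℝ) ≥ w.1 - 1 := by exact_mod_cast (by omega : z.1 ≥ w.1 - 1)
      rcases min_cases (z.1 : ℝ) (w.1 : ℝ) with ⟨e, _⟩ | ⟨e, _⟩ <;> rw [e] <;> linarith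
    · exact min_le_right _ _
    · have : (z.2 : ℝ) ≥ w.2 - 1 := by exact_mod_cast (by omega : z.2 ≥ w.2 - 1)
      rcases min_cases (z.2 : ℝ) (w.2 : ℝ) with ⟨e, _⟩ | ⟨e, _⟩ <;> rw [e] <;> linarith
    · exact min_le_right _ _

end CGT

/-! ### §2 Components and their cells -/

namespace CGT

theorem pixZ_nonempty (z : Cell) : (pixZ z).Nonempty :=
  ⟨ctr z, (sin_ctr z).mem_pixZ⟩

/-- Background of an image. -/
def bgd (S : Set (ℕ × ℕ)) : Set Plane := (fg S)ᶜ

/-- The background part of a cell. -/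
def piece (S : Set (ℕ × ℕ)) (z : Cell) : Set Plane := pixZ z \ fg S

variable {S : Set (ℕ × ℕ)}

theorem pixZ_subset_fg {z : Cell} (hz : z ∈ cellsOf S) : pixZ z ⊆ fg S := by
  rw [fg_eq_iUnion]; exact Set.subset_biUnion_of_mem hz

theorem notMem_fg_of_sin {x : Plane} {z : Cell} (hz : z ∉ cellsOf S) (hx : SIn x z) :
    x ∉ fg S := by
  intro hmem
  rw [fg_eq_iUnion] at hmem
  simp only [Set.mem_iUnion, exists_prop] at hmem
  obtain ⟨u, hu, hxu⟩ := hmem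
  exact hz (hx.eq_of_mem_pixZ hxu ▸ hu)

theorem ctr_mem_piece {z : Cell} (hz : z ∉ cellsOf S) : ctr z ∈ piece S z :=
  ⟨(sin_ctr z).mem_pixZ, notMem_fg_of_sin hz (sin_ctr z)⟩

theorem joinedIn_piece {z : Cell} (hz : z ∉ cellsOf S) {y : Plane} (hy : y ∈ piece S z) :
    JoinedIn (piece S z) y (ctr z) := by
  refine ⟨⟨⟨fun t => (1 - (t : ℝ)) • y + (t : ℝ) • ctr z, by fun_prop⟩, ?_, ?_⟩, ?_⟩
  · show (1 - ((0 : unitInterval) : ℝ)) • y + ((0 : unitInterval) : ℝ) • ctr z = y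
    rw [show ((0 : unitInterval) : ℝ) = 0 from rfl, sub_zero, one_smul, zero_smul, add_zero]
  · show (1 - ((1 : unitInterval) : ℝ)) • y + ((1 : unitInterval) : ℝ) • ctr z = ctr z
    rw [show ((1 : unitInterval) : ℝ) = 1 from rfl, sub_self, zero_smul, one_smul, zero_add]
  intro t
  show (1 - (t : ℝ)) • y + (t : ℝ) • ctr z ∈ piece S z
  rcases eq_or_lt_of_le t.2.1 with h0 | h0
  · rw [← h0, sub_zero, one_smul, zero_smul, add_zero]; exact hy
  · have hs : SIn ((1 - (t : ℝ)) • y + (t : ℝ) • ctr z) z := sin_combo hy.1 h0 t.2.2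
    exact ⟨hs.mem_pixZ, notMem_fg_of_sin hz hs⟩

theorem isPreconnected_piece {z : Cell} (hz : z ∉ cellsOf S) : IsPreconnected (piece S z) := by
  have : IsPathConnected (piece S z) :=
    ⟨ctr z, ctr_mem_piece hz, fun {y} hy => (joinedIn_piece hz hy).symm⟩
  exact this.isConnected.isPreconnected

/-- 4-adjacency of cells. -/
def Adj4 (z w : Cell) : Prop :=
  (z.1 = w.1 ∧ (z.2 = w.2 + 1 ∨ w.2 = z.2 + 1)) ∨ (z.2 = w.2 ∧ (z.1 = w.1 + 1 ∨ w.1 = z.1 + 1))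

theorem adj4_symm {z w : Cell} (h : Adj4 z w) : Adj4 w z := by
  unfold Adj4 at *; omega

theorem Adj4.ne {z w : Cell} (h : Adj4 z w) : z ≠ w := by
  unfold Adj4 at h
  intro he; rw [he] at h; omega

/-- A convenient way to write points. -/
def pt (a b : ℝ) : Plane := fun i => if i = 0 then a else b

@[simp] theorem pt_zero (a b : ℝ) : pt a b 0 = a := rfl
@[simp] theorem pt_one (a b : ℝ) : pt a b 1 = b := rfl

theorem mem_pixZ_pt {a b : ℝ} {z : Cell} :
    pt a b ∈ pixZ z ↔ ((z.1 : ℝ) - 1 ≤ a ∧ a ≤ z.1) ∧ ((z.2 : ℝ) - 1 ≤ b ∧ b ≤ z.2) :=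
  Iff.rfl

/-- A shared boundary point of two 4-adjacent cells, lying in no other pixel. -/
theorem exists_border_pt {z w : Cell} (h : Adj4 z w) :
    ∃ m : Plane, m ∈ pixZ z ∧ m ∈ pixZ w ∧ ∀ u : Cell, m ∈ pixZ u → u = z ∨ u = w := by
  have key : ∀ a : Cell, ∃ m : Plane, m ∈ pixZ a ∧ m ∈ pixZ (a.1 + 1, a.2) ∧
      ∀ u : Cell, m ∈ pixZ u → u = a ∨ u = (a.1 + 1, a.2) := by
    intro a
    refine ⟨pt (a.1 : ℝ) ((a.2 : ℝ) - 1/2), ?_, ?_, ?_⟩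
    · exact mem_pixZ_pt.2 ⟨⟨by linarith, le_refl _⟩, ⟨by linarith, by linarith⟩⟩
    · refine mem_pixZ_pt.2 ⟨⟨?_, ?_⟩, ⟨by linarith, by linarith⟩⟩ <;> push_cast <;> linarith
    · intro u hu
      rw [mem_pixZ_pt] at hu
      obtain ⟨⟨g1, g2⟩, ⟨g3, g4⟩⟩ := hu
      have e2 : u.2 = a.2 := by
        have a1 : (u.2 : ℝ) < a.2 + 1 := by linarith
        have a2 : (a.2 : ℝ) < u.2 + 1 := by linarith
        have b1 : u.2 < a.2 + 1 := by exact_mod_cast a1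
        have b2 : a.2 < u.2 + 1 := by exact_mod_cast a2
        omega
      have d1 : u.1 - 1 ≤ a.1 := by exact_mod_cast g1
      have d2 : a.1 ≤ u.1 := by exact_mod_cast g2
      have : u.1 = a.1 ∨ u.1 = a.1 + 1 := by omega
      rcases this with h' | h'
      · exact Or.inl (Prod.ext h' e2)
      · exact Or.inr (Prod.ext h' e2)
  have key2 : ∀ a : Cell, ∃ m : Plane, m ∈ pixZ a ∧ m ∈ pixZ (a.1, a.2 + 1) ∧
      ∀ u : Cell, m ∈ pixZ u → u = a ∨ u = (a.1, a.2 + 1) := by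
    intro a
    refine ⟨pt ((a.1 : ℝ) - 1/2) (a.2 : ℝ), ?_, ?_, ?_⟩
    · exact mem_pixZ_pt.2 ⟨⟨by linarith, by linarith⟩, ⟨by linarith, le_refl _⟩⟩
    · refine mem_pixZ_pt.2 ⟨⟨by linarith, by linarith⟩, ⟨?_, ?_⟩⟩ <;> push_cast <;> linarith
    · intro u hu
      rw [mem_pixZ_pt] at hu
      obtain ⟨⟨g1, g2⟩, ⟨g3, g4⟩⟩ := hu
      have e1 : u.1 = a.1 := by
        have a1 : (u.1 : ℝ) < a.1 + 1 := by linarith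
        have a2 : (a.1 : ℝ) < u.1 + 1 := by linarith
        have b1 : u.1 < a.1 + 1 := by exact_mod_cast a1
        have b2 : a.1 < u.1 + 1 := by exact_mod_cast a2
        omega
      have d1 : u.2 - 1 ≤ a.2 := by exact_mod_cast g3
      have d2 : a.2 ≤ u.2 := by exact_mod_cast g4
      have : u.2 = a.2 ∨ u.2 = a.2 + 1 := by omega
      rcases this with h' | h'
      · exact Or.inl (Prod.ext e1 h')
      · exact Or.inr (Prod.ext e1 h')
  have hcase : w = (z.1 + 1, z.2) ∨ z = (w.1 + 1, w.2) ∨ w = (z.1, z.2 + 1) ∨ z = (w.1, w.2 + 1) := by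
    unfold Adj4 at h
    rcases w with ⟨w1, w2⟩; rcases z with ⟨z1, z2⟩
    simp only [Prod.mk.injEq]
    omega
  rcases hcase with hc | hc | hc | hc
  · obtain ⟨m, h1, h2, h3⟩ := key z
    exact ⟨m, h1, hc ▸ h2, fun u hu => by rcases h3 u hu with h' | h' <;> [exact Or.inl h'; exact Or.inr (hc ▸ h')]⟩
  · obtain ⟨m, h1, h2, h3⟩ := key w
    exact ⟨m, hc ▸ h2, h1, fun u hu => by rcases h3 u hu with h' | h' <;> [exact Or.inr h'; exact Or.inl (hc ▸ h')]⟩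
  · obtain ⟨m, h1, h2, h3⟩ := key2 z
    exact ⟨m, h1, hc ▸ h2, fun u hu => by rcases h3 u hu with h' | h' <;> [exact Or.inl h'; exact Or.inr (hc ▸ h')]⟩
  · obtain ⟨m, h1, h2, h3⟩ := key2 w
    exact ⟨m, hc ▸ h2, h1, fun u hu => by rcases h3 u hu with h' | h' <;> [exact Or.inr h'; exact Or.inl (hc ▸ h')]⟩

/-- Maximality of connected components. -/
theorem _root_.IsCompOf.subset_self {C : Set Plane} {A : Set Plane} (h : IsCompOf C A) : C ⊆ A := by
  obtain ⟨x, hx, rfl⟩ := h; exact connectedComponentIn_subset A x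

theorem _root_.IsCompOf.preconnected {C A : Set Plane} (h : IsCompOf C A) : IsPreconnected C := by
  obtain ⟨x, hx, rfl⟩ := h; exact isPreconnected_connectedComponentIn

theorem _root_.IsCompOf.nonempty {C A : Set Plane} (h : IsCompOf C A) : C.Nonempty := by
  obtain ⟨x, hx, rfl⟩ := h; exact ⟨x, mem_connectedComponentIn hx⟩

theorem _root_.IsCompOf.subset_of_meet {C A s : Set Plane} (h : IsCompOf C A) (hs : IsPreconnected s)
    (hsub : s ⊆ A) (hmeet : (s ∩ C).Nonempty) : s ⊆ C := by
  obtain ⟨x, hx, rfl⟩ := h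
  obtain ⟨y, hys, hyC⟩ := hmeet
  have h1 : s ⊆ connectedComponentIn A y := hs.subset_connectedComponentIn hys hsub
  rwa [← connectedComponentIn_eq hyC] at h1

theorem _root_.IsCompOf.eq_of_meet {C D A : Set Plane} (hC : IsCompOf C A) (hD : IsCompOf D A)
    (h : (C ∩ D).Nonempty) : C = D := by
  obtain ⟨x, hx, rfl⟩ := hC
  obtain ⟨y, hy, rfl⟩ := hD
  obtain ⟨u, hu1, hu2⟩ := h
  rw [connectedComponentIn_eq hu1, connectedComponentIn_eq hu2]

/-- Cells of a foreground component. -/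
def cellsF (S : Set (ℕ × ℕ)) (F : Set Plane) : Set Cell :=
  {z | z ∈ cellsOf S ∧ pixZ z ⊆ F}

/-- Cells of a background component. -/
def cellsB (S : Set (ℕ × ℕ)) (B : Set Plane) : Set Cell :=
  {z | z ∉ cellsOf S ∧ piece S z ⊆ B}

theorem cellsF_disjoint_cellsB {F B : Set Plane} {z : Cell} (hz : z ∈ cellsF S F)
    (hz' : z ∈ cellsB S B) : False := hz'.1 hz.1

/-- D1: 8-step within the foreground stays in the same component. -/
theorem mem_cellsF_of_adj {F : Set Plane} (hF : IsCompOf F (fg S)) {z w : Cell}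
    (hz : z ∈ cellsF S F) (hw : w ∈ cellsOf S) (h1 : |z.1 - w.1| ≤ 1) (h2 : |z.2 - w.2| ≤ 1) :
    w ∈ cellsF S F := by
  obtain ⟨m, hmz, hmw⟩ : (pixZ z ∩ pixZ w).Nonempty := pix_inter_iff.2 ⟨h1, h2⟩
  have hu : IsPreconnected (pixZ z ∪ pixZ w) :=
    (isPreconnected_pixZ z).union m hmz hmw (isPreconnected_pixZ w)
  have hsub : pixZ z ∪ pixZ w ⊆ fg S :=
    Set.union_subset (pixZ_subset_fg hz.1) (pixZ_subset_fg hw)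
  have hmeet : ((pixZ z ∪ pixZ w) ∩ F).Nonempty :=
    ⟨ctr z, Or.inl (sin_ctr z).mem_pixZ, hz.2 (sin_ctr z).mem_pixZ⟩
  exact ⟨hw, (Set.union_subset_iff.1 (hF.subset_of_meet hu hsub hmeet)).2⟩

/-- D2: 4-step within the background stays in the same component. -/
theorem mem_cellsB_of_adj4 {B : Set Plane} (hB : IsCompOf B (bgd S)) {z w : Cell}
    (hz : z ∈ cellsB S B) (hw : w ∉ cellsOf S) (h : Adj4 z w) :
    w ∈ cellsB S B := by
  obtain ⟨m, hmz, hmw, hmu⟩ := exists_border_pt h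
  have hmbg : m ∉ fg S := by
    intro hm
    rw [fg_eq_iUnion] at hm
    simp only [Set.mem_iUnion, exists_prop] at hm
    obtain ⟨u, hu, hxu⟩ := hm
    rcases hmu u hxu with rfl | rfl
    · exact hz.1 hu
    · exact hw hu
  have hu : IsPreconnected (piece S z ∪ piece S w) :=
    (isPreconnected_piece hz.1).union m ⟨hmz, hmbg⟩ ⟨hmw, hmbg⟩ (isPreconnected_piece hw)
  have hsub : piece S z ∪ piece S w ⊆ bgd S := by
    rintro x (hx | hx) <;> exact hx.2
  have hmeet : ((piece S z ∪ piece S w) ∩ B).Nonempty :=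
    ⟨ctr z, Or.inl (ctr_mem_piece hz.1), hz.2 (ctr_mem_piece hz.1)⟩
  exact ⟨hw, (Set.union_subset_iff.1 (hB.subset_of_meet hu hsub hmeet)).2⟩

theorem F_eq_iUnion_cellsF {F : Set Plane} (hF : IsCompOf F (fg S)) :
    F = ⋃ z ∈ cellsF S F, pixZ z := by
  apply Set.Subset.antisymm
  · intro x hx
    have hxfg : x ∈ fg S := hF.subset_self hx
    rw [fg_eq_iUnion] at hxfg
    simp only [Set.mem_iUnion, exists_prop] at hxfg
    obtain ⟨z, hz, hxz⟩ := hxfg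
    have : pixZ z ⊆ F :=
      hF.subset_of_meet (isPreconnected_pixZ z) (pixZ_subset_fg hz) ⟨x, hxz, hx⟩
    simp only [Set.mem_iUnion, exists_prop]
    exact ⟨z, ⟨hz, this⟩, hxz⟩
  · intro x hx
    simp only [Set.mem_iUnion, exists_prop] at hx
    obtain ⟨z, hz, hxz⟩ := hx
    exact hz.2 hxz

theorem cell_mem_cellsB {B : Set Plane} (hB : IsCompOf B (bgd S)) {y : Plane} (hy : y ∈ B)
    {z : Cell} (hz : y ∈ pixZ z) : z ∈ cellsB S B := by
  have hybg : y ∉ fg S := hB.subset_self hy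
  have hzS : z ∉ cellsOf S := fun h => hybg (pixZ_subset_fg h hz)
  exact ⟨hzS, hB.subset_of_meet (isPreconnected_piece hzS) (fun x hx => hx.2)
    ⟨y, ⟨hz, hybg⟩, hy⟩⟩

theorem B_eq_iUnion_cellsB {B : Set Plane} (hB : IsCompOf B (bgd S)) :
    B = ⋃ z ∈ cellsB S B, piece S z := by
  apply Set.Subset.antisymm
  · intro x hx
    obtain ⟨z, hz⟩ := exists_cell x
    have := cell_mem_cellsB hB hx hz
    simp only [Set.mem_iUnion, exists_prop]
    exact ⟨z, this, hz, hB.subset_self hx⟩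
  · intro x hx
    simp only [Set.mem_iUnion, exists_prop] at hx
    obtain ⟨z, hz, hxz⟩ := hx
    exact hz.2 hxz

end CGT

/-! ### §3 Discrete connectivity of component cells -/

namespace CGT

variable {S : Set (ℕ × ℕ)}

/-- 8-relation between cells of a foreground component. -/
def Rel8 (S : Set (ℕ × ℕ)) (F : Set Plane) (a b : Cell) : Prop :=
  a ∈ cellsF S F ∧ b ∈ cellsF S F ∧ |a.1 - b.1| ≤ 1 ∧ |a.2 - b.2| ≤ 1

/-- 4-relation between cells of a background component. -/
def Rel4 (S : Set (ℕ × ℕ)) (B : Set Plane) (a b : Cell) : Prop :=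
  a ∈ cellsB S B ∧ b ∈ cellsB S B ∧ Adj4 a b

theorem rel4_symm {B : Set Plane} : Symmetric (Rel4 S B) :=
  fun _ _ h => ⟨h.2.1, h.1, adj4_symm h.2.2⟩

/-- Discrete connectivity of the cells of a foreground component. -/
theorem cellsF_conn (hfin : S.Finite) {F : Set Plane} (hF : IsCompOf F (fg S)) {z w : Cell}
    (hz : z ∈ cellsF S F) (hw : w ∈ cellsF S F) :
    Relation.ReflTransGen (Rel8 S F) z w := by
  by_contra hcon
  have hcells : (cellsOf S).Finite := (hfin.image _)
  set R := {u : Cell | u ∈ cellsF S F ∧ Relation.ReflTransGen (Rel8 S F) z u} with hR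
  have hzR : z ∈ R := ⟨hz, Relation.ReflTransGen.refl⟩
  have hwR : w ∈ cellsF S F \ R := ⟨hw, fun h => hcon h.2⟩
  set U1 := ⋃ u ∈ R, pixZ u with hU1
  set U2 := ⋃ u ∈ cellsF S F \ R, pixZ u with hU2
  have hC1 : IsClosed U1 :=
    Set.Finite.isClosed_biUnion (hcells.subset (fun u hu => hu.1.1)) (fun u _ => isClosed_pixZ u)
  have hC2 : IsClosed U2 :=
    Set.Finite.isClosed_biUnion (hcells.subset (fun u hu => hu.1.1)) (fun u _ => isClosed_pixZ u)
  have hcover : F ⊆ U1 ∪ U2 := by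
    intro x hx
    rw [F_eq_iUnion_cellsF hF] at hx
    simp only [Set.mem_iUnion, exists_prop] at hx
    obtain ⟨u, hu, hxu⟩ := hx
    by_cases huR : u ∈ R
    · exact Or.inl (Set.mem_biUnion huR hxu)
    · exact Or.inr (Set.mem_biUnion ⟨hu, huR⟩ hxu)
  have hne1 : (F ∩ U1).Nonempty := ⟨ctr z, hz.2 (sin_ctr z).mem_pixZ,
    Set.mem_biUnion hzR (sin_ctr z).mem_pixZ⟩
  have hne2 : (F ∩ U2).Nonempty := ⟨ctr w, hw.2 (sin_ctr w).mem_pixZ,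
    Set.mem_biUnion hwR (sin_ctr w).mem_pixZ⟩
  obtain ⟨x, _, hx1, hx2⟩ :=
    (isPreconnected_closed_iff.1 hF.preconnected) U1 U2 hC1 hC2 hcover hne1 hne2
  simp only [hU1, hU2, Set.mem_iUnion, exists_prop] at hx1 hx2
  obtain ⟨u, huR, hxu⟩ := hx1
  obtain ⟨v, hvR, hxv⟩ := hx2
  have hadj : |u.1 - v.1| ≤ 1 ∧ |u.2 - v.2| ≤ 1 := pix_inter_iff.1 ⟨x, hxu, hxv⟩
  exact hvR.2 ⟨hvR.1, huR.2.tail ⟨huR.1, hvR.1, hadj.1, hadj.2⟩⟩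

/-- Coordinate margin. -/
def marg (a : ℝ) : ℝ := min (a - (⌈a⌉ - 1)) ((⌊a⌋ + 1) - a)

theorem marg_pos (a : ℝ) : 0 < marg a := by
  apply lt_min
  · have := Int.ceil_lt_add_one a; linarith
  · have := Int.lt_floor_add_one a; linarith

theorem coord_cell {a b : ℝ} (h : |b - a| < marg a) :
    ∃ n : ℤ, ((n : ℝ) - 1 ≤ a ∧ a ≤ n) ∧ ((n : ℝ) - 1 ≤ b ∧ b ≤ n) := by
  rw [abs_sub_lt_iff] at h
  obtain ⟨h1, h2⟩ := h
  have hm1 : marg a ≤ a - (⌈a⌉ - 1) := min_le_left _ _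
  have hm2 : marg a ≤ (⌊a⌋ + 1) - a := min_le_right _ _
  rcases le_total a b with hab | hab
  · refine ⟨⌊a⌋ + 1, ⟨?_, ?_⟩, ?_, ?_⟩ <;> push_cast
    · linarith [Int.floor_le a]
    · linarith [Int.lt_floor_add_one a]
    · linarith [Int.floor_le a]
    · linarith
  · refine ⟨⌈a⌉, ⟨?_, ?_⟩, ?_, ?_⟩ <;> push_cast
    · linarith [Int.ceil_lt_add_one a]
    · exact Int.le_ceil a
    · linarith
    · linarith [Int.le_ceil a]

/-- Nearby points share a cell. -/
theorem near_cell {y x : Plane} (h0 : |x 0 - y 0| < marg (y 0)) (h1 : |x 1 - y 1| < marg (y 1)) :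
    ∃ z : Cell, y ∈ pixZ z ∧ x ∈ pixZ z := by
  obtain ⟨n0, hy0, hx0⟩ := coord_cell h0
  obtain ⟨n1, hy1, hx1⟩ := coord_cell h1
  exact ⟨(n0, n1), ⟨hy0, hy1⟩, ⟨hx0, hx1⟩⟩

theorem rel4_chain_vert {B : Set Plane} {u c : Cell} (hu : u ∈ cellsB S B) (hc : c ∈ cellsB S B)
    (h1 : u.1 = c.1) (h2 : |u.2 - c.2| ≤ 1) : Relation.ReflTransGen (Rel4 S B) u c := by
  rcases eq_or_ne u c with rfl | hne
  · exact Relation.ReflTransGen.refl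
  · refine Relation.ReflTransGen.single ⟨hu, hc, ?_⟩
    unfold Adj4
    rw [abs_le] at h2
    have : u.2 ≠ c.2 := fun h => hne (Prod.ext h1 h)
    omega

theorem rel4_chain_horiz {B : Set Plane} {u c : Cell} (hu : u ∈ cellsB S B) (hc : c ∈ cellsB S B)
    (h1 : u.2 = c.2) (h2 : |u.1 - c.1| ≤ 1) : Relation.ReflTransGen (Rel4 S B) u c := by
  rcases eq_or_ne u c with rfl | hne
  · exact Relation.ReflTransGen.refl
  · refine Relation.ReflTransGen.single ⟨hu, hc, ?_⟩
    unfold Adj4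
    rw [abs_le] at h2
    have : u.1 ≠ c.1 := fun h => hne (Prod.ext h h1)
    omega

/-- All cells containing a common background point are 4-chained in the background component. -/
theorem ycells_chain {B : Set Plane} (hB : IsCompOf B (bgd S)) {y : Plane} (hy : y ∈ B)
    {u v : Cell} (hu : y ∈ pixZ u) (hv : y ∈ pixZ v) :
    Relation.ReflTransGen (Rel4 S B) u v := by
  have hucell : u ∈ cellsB S B := cell_mem_cellsB hB hy hu
  have hvcell : v ∈ cellsB S B := cell_mem_cellsB hB hy hv
  set c : Cell := (u.1, v.2) with hc
  have hyc : y ∈ pixZ c := ⟨hu.1, hv.2⟩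
  have hccell : c ∈ cellsB S B := cell_mem_cellsB hB hy hyc
  have huv : |u.1 - v.1| ≤ 1 ∧ |u.2 - v.2| ≤ 1 := pix_inter_iff.1 ⟨y, hu, hv⟩
  exact (rel4_chain_vert hucell hccell rfl (by simpa [hc] using huv.2)).trans
    (rel4_chain_horiz hccell hvcell rfl (by simpa [hc] using huv.1))

/-- From a point of a piece, nearby background points lie in 4-chained pieces. -/
theorem reach_lemma {B : Set Plane} (hB : IsCompOf B (bgd S)) {y x : Plane} {u : Cell}
    (hyu : y ∈ piece S u) (hu : u ∈ cellsB S B) (hx : x ∈ B)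
    (hd : dist x y < min (marg (y 0)) (marg (y 1))) :
    ∃ c : Cell, x ∈ piece S c ∧ Relation.ReflTransGen (Rel4 S B) u c := by
  have hyB : y ∈ B := hu.2 hyu
  have h0 : |x 0 - y 0| < marg (y 0) := by
    have := dist_le_pi_dist x y 0
    rw [Real.dist_eq] at this
    exact lt_of_le_of_lt this (lt_of_lt_of_le hd (min_le_left _ _))
  have h1 : |x 1 - y 1| < marg (y 1) := by
    have := dist_le_pi_dist x y 1
    rw [Real.dist_eq] at this
    exact lt_of_le_of_lt this (lt_of_lt_of_le hd (min_le_right _ _))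
  obtain ⟨c, hyc, hxc⟩ := near_cell h0 h1
  have hccell : c ∈ cellsB S B := cell_mem_cellsB hB hyB hyc
  exact ⟨c, ⟨hxc, hB.subset_self hx⟩, ycells_chain hB hyB hyu.1 hyc⟩

/-- Discrete connectivity of the cells of a background component. -/
theorem cellsB_conn {B : Set Plane} (hB : IsCompOf B (bgd S)) {z w : Cell}
    (hz : z ∈ cellsB S B) (hw : w ∈ cellsB S B) :
    Relation.ReflTransGen (Rel4 S B) z w := by
  by_contra hcon
  set R := {u : Cell | u ∈ cellsB S B ∧ Relation.ReflTransGen (Rel4 S B) z u} with hR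
  have hzR : z ∈ R := ⟨hz, Relation.ReflTransGen.refl⟩
  have hwR : w ∈ cellsB S B \ R := ⟨hw, fun h => hcon h.2⟩
  set V1 := ⋃ u ∈ R, piece S u with hV1
  set V2 := ⋃ u ∈ cellsB S B \ R, piece S u with hV2
  set U1 := ⋃ y ∈ V1, Metric.ball y (min (marg (y 0)) (marg (y 1))) with hU1
  set U2 := ⋃ y ∈ V2, Metric.ball y (min (marg (y 0)) (marg (y 1))) with hU2
  have hO1 : IsOpen U1 := isOpen_biUnion (fun y _ => Metric.isOpen_ball)
  have hO2 : IsOpen U2 := isOpen_biUnion (fun y _ => Metric.isOpen_ball)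
  have hδ : ∀ y : Plane, 0 < min (marg (y 0)) (marg (y 1)) :=
    fun y => lt_min (marg_pos _) (marg_pos _)
  have hcover : B ⊆ U1 ∪ U2 := by
    intro x hx
    have hx' := hx
    rw [B_eq_iUnion_cellsB hB] at hx'
    simp only [Set.mem_iUnion, exists_prop] at hx'
    obtain ⟨u, hu, hxu⟩ := hx'
    by_cases huR : u ∈ R
    · exact Or.inl (Set.mem_biUnion (Set.mem_biUnion huR hxu) (Metric.mem_ball_self (hδ x)))
    · exact Or.inr (Set.mem_biUnion (Set.mem_biUnion ⟨hu, huR⟩ hxu) (Metric.mem_ball_self (hδ x)))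
  have hne1 : (B ∩ U1).Nonempty := by
    refine ⟨ctr z, hz.2 (ctr_mem_piece hz.1), ?_⟩
    exact Set.mem_biUnion (Set.mem_biUnion hzR (ctr_mem_piece hz.1)) (Metric.mem_ball_self (hδ _))
  have hne2 : (B ∩ U2).Nonempty := by
    refine ⟨ctr w, hw.2 (ctr_mem_piece hw.1), ?_⟩
    exact Set.mem_biUnion (Set.mem_biUnion hwR (ctr_mem_piece hw.1)) (Metric.mem_ball_self (hδ _))
  obtain ⟨x, hxB, hx1, hx2⟩ := hB.preconnected U1 U2 hO1 hO2 hcover hne1 hne2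
  simp only [hU1, hU2, Set.mem_iUnion, exists_prop] at hx1 hx2
  obtain ⟨y1, hy1V, hxy1⟩ := hx1
  obtain ⟨y2, hy2V, hxy2⟩ := hx2
  simp only [hV1, hV2, Set.mem_iUnion, exists_prop] at hy1V hy2V
  obtain ⟨u1, hu1R, hy1u⟩ := hy1V
  obtain ⟨u2, hu2R, hy2u⟩ := hy2V
  rw [Metric.mem_ball] at hxy1 hxy2
  obtain ⟨c1, hxc1, hchain1⟩ := reach_lemma hB hy1u hu1R.1 hxB hxy1
  obtain ⟨c2, hxc2, hchain2⟩ := reach_lemma hB hy2u hu2R.1 hxB hxy2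
  have hcc : Relation.ReflTransGen (Rel4 S B) c1 c2 := ycells_chain hB hxB hxc1.1 hxc2.1
  have : Relation.ReflTransGen (Rel4 S B) z u2 :=
    ((hu1R.2.trans hchain1).trans hcc).trans
      (haveI : Std.Symm (Rel4 S B) := ⟨fun _ _ h => rel4_symm h⟩; Std.Symm.symm _ _ hchain2)
  exact hu2R.2 ⟨hu2R.1, this⟩

end CGT

/-! ### §4 The crossing-parity function -/

namespace CGT

open Classical in
/-- Foreground/background boundary pair. -/
noncomputable def fbi (S : Set (ℕ × ℕ)) (F B : Set Plane) (u v : Cell) : ZMod 2 :=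
  if (u ∈ cellsF S F ∧ v ∈ cellsB S B) ∨ (v ∈ cellsF S F ∧ u ∈ cellsB S B) then 1 else 0

theorem fbi_symm (S : Set (ℕ × ℕ)) (F B : Set Plane) (u v : Cell) :
    fbi S F B u v = fbi S F B v u := by
  classical
  unfold fbi
  exact if_congr or_comm rfl rfl

/-- The set of vertical boundary crossings below a cell. -/
def crossSet (S : Set (ℕ × ℕ)) (F B : Set Plane) (z : Cell) : Set ℤ :=
  {a : ℤ | a < z.1 ∧ ((((a, z.2) : Cell) ∈ cellsF S F ∧ ((a+1, z.2) : Cell) ∈ cellsB S B) ∨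
    (((a+1, z.2) : Cell) ∈ cellsF S F ∧ ((a, z.2) : Cell) ∈ cellsB S B))}

theorem crossSet_finite {S : Set (ℕ × ℕ)} (hfin : S.Finite) (F B : Set Plane) (z : Cell) :
    (crossSet S F B z).Finite := by
  have h1 : (cellsOf S).Finite := hfin.image _
  have h2 : ((fun a : ℤ => ((a, z.2) : Cell)) ⁻¹' cellsOf S).Finite :=
    h1.preimage (fun a _ b _ h => by simpa using (Prod.ext_iff.1 h).1)
  have h3 : ((fun a : ℤ => ((a + 1, z.2) : Cell)) ⁻¹' cellsOf S).Finite :=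
    h1.preimage (fun a _ b _ h => by have := (Prod.ext_iff.1 h).1; simpa using by omega)
  apply (h2.union h3).subset
  rintro a ⟨_, (⟨hf, _⟩ | ⟨hf, _⟩)⟩
  · exact Or.inl hf.1
  · exact Or.inr hf.1

/-- The parity function. -/
noncomputable def par (S : Set (ℕ × ℕ)) (F B : Set Plane) (z : Cell) : ZMod 2 :=
  (((crossSet S F B z).ncard : ℕ) : ZMod 2)

/-- P1 : vertical step. -/
theorem par_vstep {S : Set (ℕ × ℕ)} (hfin : S.Finite) (F B : Set Plane) (i j : ℤ) :
    par S F B (i + 1, j) = par S F B (i, j) + fbi S F B (i, j) (i + 1, j) := by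
  classical
  by_cases hp : (((i, j) : Cell) ∈ cellsF S F ∧ ((i+1, j) : Cell) ∈ cellsB S B) ∨
      (((i+1, j) : Cell) ∈ cellsF S F ∧ ((i, j) : Cell) ∈ cellsB S B)
  · have hset : crossSet S F B (i + 1, j) = insert i (crossSet S F B (i, j)) := by
      ext a
      simp only [crossSet, Set.mem_setOf_eq, Set.mem_insert_iff]
      constructor
      · rintro ⟨ha, hP⟩
        rcases eq_or_lt_of_le (Int.lt_add_one_iff.1 ha) with rfl | h'
        · exact Or.inl rfl
        · exact Or.inr ⟨h', hP⟩
      · rintro (rfl | ⟨ha, hP⟩)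
        · exact ⟨by omega, hp⟩
        · exact ⟨by omega, hP⟩
    have hnm : i ∉ crossSet S F B (i, j) := fun h => absurd h.1 (lt_irrefl i)
    rw [par, hset, Set.ncard_insert_of_notMem hnm (crossSet_finite hfin F B _)]
    rw [par, fbi, if_pos hp]
    push_cast
    ring
  · have hset : crossSet S F B (i + 1, j) = crossSet S F B (i, j) := by
      ext a
      simp only [crossSet, Set.mem_setOf_eq]
      constructor
      · rintro ⟨ha, hP⟩
        refine ⟨?_, hP⟩
        rcases eq_or_lt_of_le (Int.lt_add_one_iff.1 ha) with rfl | h'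
        · exact absurd hP hp
        · exact h'
      · rintro ⟨ha, hP⟩
        exact ⟨by omega, hP⟩
    rw [par, hset, fbi, if_neg hp, add_zero, par]

theorem fbi_of_fg {S : Set (ℕ × ℕ)} {F B : Set Plane} {u v : Cell}
    (hu : u ∈ cellsOf S) (hv : v ∈ cellsOf S) : fbi S F B u v = 0 := by
  classical
  rw [fbi, if_neg]
  rintro (⟨_, hb⟩ | ⟨_, hb⟩)
  · exact hb.1 hv
  · exact hb.1 hu

theorem fbi_of_bg {S : Set (ℕ × ℕ)} {F B : Set Plane} {u v : Cell}
    (hu : u ∉ cellsOf S) (hv : v ∉ cellsOf S) : fbi S F B u v = 0 := by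
  classical
  rw [fbi, if_neg]
  rintro (⟨hf, _⟩ | ⟨hf, _⟩)
  · exact hu hf.1
  · exact hv hf.1

open Classical in
theorem fbi_mixed {S : Set (ℕ × ℕ)} {F B : Set Plane} {u v : Cell}
    (hu : u ∈ cellsOf S) (hv : v ∉ cellsOf S) :
    fbi S F B u v = if u ∈ cellsF S F ∧ v ∈ cellsB S B then 1 else 0 := by
  classical
  rw [fbi]
  refine if_congr ⟨?_, Or.inl⟩ rfl rfl
  rintro (h | ⟨hf, _⟩)
  · exact h
  · exact absurd hf.1 hv

open Classical in
theorem fbi_mixed' {S : Set (ℕ × ℕ)} {F B : Set Plane} {u v : Cell}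
    (hu : u ∉ cellsOf S) (hv : v ∈ cellsOf S) :
    fbi S F B u v = if v ∈ cellsF S F ∧ u ∈ cellsB S B then 1 else 0 := by
  classical
  rw [fbi_symm, fbi_mixed hv hu]

/-- The even-corner lemma: around each lattice corner the number of boundary pairs is even. -/
theorem even_corner {S : Set (ℕ × ℕ)} {F B : Set Plane}
    (hF : IsCompOf F (fg S)) (hB : IsCompOf B (bgd S)) (i j : ℤ) :
    fbi S F B (i, j) (i + 1, j) + fbi S F B (i, j + 1) (i + 1, j + 1) +
    fbi S F B (i, j) (i, j + 1) + fbi S F B (i + 1, j) (i + 1, j + 1) = 0 := by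
  classical
  set nw : Cell := (i, j) with hnw
  set ne : Cell := (i, j + 1) with hne
  set sw : Cell := (i + 1, j) with hsw
  set se : Cell := (i + 1, j + 1) with hse
  have habs : ∀ a b : ℤ, a = b ∨ a = b + 1 ∨ b = a + 1 → |a - b| ≤ 1 := by
    intro a b h; rw [abs_le]; omega
  -- iff for foreground membership between any two corner cells
  have FFiff : ∀ u v : Cell, u ∈ cellsOf S → v ∈ cellsOf S →
      |u.1 - v.1| ≤ 1 → |u.2 - v.2| ≤ 1 → ((u ∈ cellsF S F) ↔ (v ∈ cellsF S F)) := by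
    intro u v hu hv h1 h2
    constructor
    · intro h; exact mem_cellsF_of_adj hF h hv h1 h2
    · intro h; exact mem_cellsF_of_adj hF h hu (by rw [abs_sub_comm]; exact h1)
        (by rw [abs_sub_comm]; exact h2)
  have BBiff : ∀ u v : Cell, u ∉ cellsOf S → v ∉ cellsOf S → Adj4 u v →
      ((u ∈ cellsB S B) ↔ (v ∈ cellsB S B)) := by
    intro u v hu hv h
    exact ⟨fun h' => mem_cellsB_of_adj4 hB h' hv h,
           fun h' => mem_cellsB_of_adj4 hB h' hu (adj4_symm h)⟩
  have adj_nw_sw : Adj4 nw sw := by right; exact ⟨rfl, Or.inr rfl⟩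
  have adj_ne_se : Adj4 ne se := by right; exact ⟨rfl, Or.inr rfl⟩
  have adj_nw_ne : Adj4 nw ne := by left; exact ⟨rfl, Or.inr rfl⟩
  have adj_sw_se : Adj4 sw se := by left; exact ⟨rfl, Or.inr rfl⟩
  have Zabba : ∀ a b : ZMod 2, a + b + b + a = 0 := by decide
  have Zabab : ∀ a b : ZMod 2, a + b + a + b = 0 := by decide
  by_cases gnw : nw ∈ cellsOf S <;> by_cases gne : ne ∈ cellsOf S <;>
    by_cases gsw : sw ∈ cellsOf S <;> by_cases gse : se ∈ cellsOf S
  -- 16 cases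
  -- 1: all fg
  · rw [fbi_of_fg gnw gsw, fbi_of_fg gne gse, fbi_of_fg gnw gne, fbi_of_fg gsw gse]; decide
  -- 2: nw ne sw fg, se bg
  · rw [fbi_of_fg gnw gsw, fbi_mixed gne gse, fbi_of_fg gnw gne, fbi_mixed gsw gse]
    have e : (ne ∈ cellsF S F) ↔ (sw ∈ cellsF S F) :=
      FFiff _ _ gne gsw (habs i (i+1) (by omega)) (habs (j+1) j (by omega))
    simp only [e]
    have : ∀ x : ZMod 2, 0 + x + 0 + x = 0 := by decide
    exact this _
  -- 3: nw ne se fg, sw bg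
  · rw [fbi_mixed gnw gsw, fbi_of_fg gne gse, fbi_of_fg gnw gne, fbi_mixed' gsw gse]
    have e : (nw ∈ cellsF S F) ↔ (se ∈ cellsF S F) :=
      FFiff _ _ gnw gse (habs i (i+1) (by omega)) (habs j (j+1) (by omega))
    simp only [e]
    have : ∀ x : ZMod 2, x + 0 + 0 + x = 0 := by decide
    exact this _
  -- 4: nw ne fg, sw se bg
  · rw [fbi_mixed gnw gsw, fbi_mixed gne gse, fbi_of_fg gnw gne, fbi_of_bg gsw gse]
    have e1 : (nw ∈ cellsF S F) ↔ (ne ∈ cellsF S F) :=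
      FFiff _ _ gnw gne (habs i i (by omega)) (habs j (j+1) (by omega))
    have e2 : (sw ∈ cellsB S B) ↔ (se ∈ cellsB S B) := BBiff _ _ gsw gse adj_sw_se
    simp only [e1, e2]
    have : ∀ x : ZMod 2, x + x + 0 + 0 = 0 := by decide
    exact this _
  -- 5: nw sw se fg, ne bg
  · rw [fbi_of_fg gnw gsw, fbi_mixed' gne gse, fbi_mixed gnw gne, fbi_of_fg gsw gse]
    have e : (se ∈ cellsF S F) ↔ (nw ∈ cellsF S F) :=
      FFiff _ _ gse gnw (habs (i+1) i (by omega)) (habs (j+1) j (by omega))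
    simp only [e]
    have : ∀ x : ZMod 2, 0 + x + x + 0 = 0 := by decide
    exact this _
  -- 6: nw sw fg, ne se bg
  · rw [fbi_of_fg gnw gsw, fbi_of_bg gne gse, fbi_mixed gnw gne, fbi_mixed gsw gse]
    have e1 : (nw ∈ cellsF S F) ↔ (sw ∈ cellsF S F) :=
      FFiff _ _ gnw gsw (habs i (i+1) (by omega)) (habs j j (by omega))
    have e2 : (ne ∈ cellsB S B) ↔ (se ∈ cellsB S B) := BBiff _ _ gne gse adj_ne_se
    simp only [e1, e2]
    have : ∀ x : ZMod 2, 0 + 0 + x + x = 0 := by decide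
    exact this _
  -- 7: nw se fg, ne sw bg (diagonal)
  · rw [fbi_mixed gnw gsw, fbi_mixed' gne gse, fbi_mixed gnw gne, fbi_mixed' gsw gse]
    have e : (se ∈ cellsF S F) ↔ (nw ∈ cellsF S F) :=
      FFiff _ _ gse gnw (habs (i+1) i (by omega)) (habs (j+1) j (by omega))
    simp only [e]
    exact Zabba _ _
  -- 8: nw fg, rest bg
  · rw [fbi_mixed gnw gsw, fbi_of_bg gne gse, fbi_mixed gnw gne, fbi_of_bg gsw gse]
    have e2 : (sw ∈ cellsB S B) ↔ (ne ∈ cellsB S B) :=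
      (BBiff _ _ gsw gse adj_sw_se).trans (BBiff _ _ gse gne (adj4_symm adj_ne_se))
    simp only [e2]
    have : ∀ x : ZMod 2, x + 0 + x + 0 = 0 := by decide
    exact this _
  -- 9: ne sw se fg, nw bg
  · rw [fbi_mixed' gnw gsw, fbi_of_fg gne gse, fbi_mixed' gnw gne, fbi_of_fg gsw gse]
    have e : (sw ∈ cellsF S F) ↔ (ne ∈ cellsF S F) :=
      FFiff _ _ gsw gne (habs (i+1) i (by omega)) (habs j (j+1) (by omega))
    simp only [e]
    have : ∀ x : ZMod 2, x + 0 + x + 0 = 0 := by decide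
    exact this _
  -- 10: ne sw fg, nw se bg (diagonal)
  · rw [fbi_mixed' gnw gsw, fbi_mixed gne gse, fbi_mixed' gnw gne, fbi_mixed gsw gse]
    have e : (sw ∈ cellsF S F) ↔ (ne ∈ cellsF S F) :=
      FFiff _ _ gsw gne (habs (i+1) i (by omega)) (habs j (j+1) (by omega))
    simp only [e]
    exact Zabab _ _
  -- 11: ne se fg, nw sw bg
  · rw [fbi_of_bg gnw gsw, fbi_of_fg gne gse, fbi_mixed' gnw gne, fbi_mixed' gsw gse]
    have e1 : (ne ∈ cellsF S F) ↔ (se ∈ cellsF S F) :=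
      FFiff _ _ gne gse (habs i (i+1) (by omega)) (habs (j+1) (j+1) (by omega))
    have e2 : (nw ∈ cellsB S B) ↔ (sw ∈ cellsB S B) := BBiff _ _ gnw gsw adj_nw_sw
    simp only [e1, e2]
    have : ∀ x : ZMod 2, 0 + 0 + x + x = 0 := by decide
    exact this _
  -- 12: ne fg, rest bg
  · rw [fbi_of_bg gnw gsw, fbi_mixed gne gse, fbi_mixed' gnw gne, fbi_of_bg gsw gse]
    have e2 : (se ∈ cellsB S B) ↔ (nw ∈ cellsB S B) :=
      (BBiff _ _ gse gsw (adj4_symm adj_sw_se)).trans (BBiff _ _ gsw gnw (adj4_symm adj_nw_sw))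
    simp only [e2]
    have : ∀ x : ZMod 2, 0 + x + x + 0 = 0 := by decide
    exact this _
  -- 13: sw se fg, nw ne bg
  · rw [fbi_mixed' gnw gsw, fbi_mixed' gne gse, fbi_of_bg gnw gne, fbi_of_fg gsw gse]
    have e1 : (sw ∈ cellsF S F) ↔ (se ∈ cellsF S F) :=
      FFiff _ _ gsw gse (habs (i+1) (i+1) (by omega)) (habs j (j+1) (by omega))
    have e2 : (nw ∈ cellsB S B) ↔ (ne ∈ cellsB S B) := BBiff _ _ gnw gne adj_nw_ne
    simp only [e1, e2]
    have : ∀ x : ZMod 2, x + x + 0 + 0 = 0 := by decide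
    exact this _
  -- 14: sw fg, rest bg
  · rw [fbi_mixed' gnw gsw, fbi_of_bg gne gse, fbi_of_bg gnw gne, fbi_mixed gsw gse]
    have e2 : (nw ∈ cellsB S B) ↔ (se ∈ cellsB S B) :=
      (BBiff _ _ gnw gne adj_nw_ne).trans (BBiff _ _ gne gse adj_ne_se)
    simp only [e2]
    have : ∀ x : ZMod 2, x + 0 + 0 + x = 0 := by decide
    exact this _
  -- 15: se fg, rest bg
  · rw [fbi_of_bg gnw gsw, fbi_mixed' gne gse, fbi_of_bg gnw gne, fbi_mixed' gsw gse]
    have e2 : (ne ∈ cellsB S B) ↔ (sw ∈ cellsB S B) :=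
      (BBiff _ _ gne gnw (adj4_symm adj_nw_ne)).trans (BBiff _ _ gnw gsw adj_nw_sw)
    simp only [e2]
    have : ∀ x : ZMod 2, 0 + x + 0 + x = 0 := by decide
    exact this _
  -- 16: all bg
  · rw [fbi_of_bg gnw gsw, fbi_of_bg gne gse, fbi_of_bg gnw gne, fbi_of_bg gsw gse]; decide

end CGT

/-! ### §5 Parity arguments: the separation theorems -/

namespace CGT

/-- Lexicographic order on cells. -/
def lexLt (z w : Cell) : Prop := z.1 < w.1 ∨ (z.1 = w.1 ∧ z.2 < w.2)

variable {S : Set (ℕ × ℕ)} {F B : Set Plane}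

theorem cellsF_row_ge (hrow : ∀ z ∈ cellsOf S, 1 ≤ z.1) {u : Cell} (hu : u ∈ cellsF S F) :
    1 ≤ u.1 := hrow u hu.1

/-- Parity vanishes at small rows. -/
theorem par_row_nonpos (hrow : ∀ z ∈ cellsOf S, 1 ≤ z.1) {i j : ℤ} (hi : i ≤ 0) :
    par S F B (i, j) = 0 := by
  have : crossSet S F B (i, j) = ∅ := by
    rw [Set.eq_empty_iff_forall_notMem]
    rintro a ⟨ha, (⟨hf, _⟩ | ⟨hf, _⟩)⟩
    · have := cellsF_row_ge hrow hf; simp at this ha; omega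
    · have := cellsF_row_ge hrow hf; simp at this ha; omega
  rw [par, this, Set.ncard_empty]
  rfl

theorem fbi_row_nonpos (hrow : ∀ z ∈ cellsOf S, 1 ≤ z.1) {i j j' : ℤ} (hi : i ≤ 0) :
    fbi S F B (i, j) (i, j') = 0 := by
  classical
  rw [fbi, if_neg]
  rintro (⟨hf, _⟩ | ⟨hf, _⟩) <;>
    · have := cellsF_row_ge hrow hf; simp at this; omega

/-- P2 : horizontal step. -/
theorem par_hstep (hfin : S.Finite) (hrow : ∀ z ∈ cellsOf S, 1 ≤ z.1)
    (hF : IsCompOf F (fg S)) (hB : IsCompOf B (bgd S)) (i j : ℤ) :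
    par S F B (i, j + 1) = par S F B (i, j) + fbi S F B (i, j) (i, j + 1) := by
  induction i using Int.induction_on with
  | zero =>
      rw [par_row_nonpos hrow le_rfl, par_row_nonpos hrow le_rfl,
        fbi_row_nonpos hrow le_rfl, add_zero]
  | succ k ih =>
      have E := even_corner hF hB (k : ℤ) j
      have key : ∀ p a b c d : ZMod 2, a + b + c + d = 0 → p + c + b = p + a + d := by decide
      rw [par_vstep hfin F B (k : ℤ) (j + 1), par_vstep hfin F B (k : ℤ) j, ih]
      exact key _ _ _ _ _ E
  | pred k _ =>
      rw [par_row_nonpos hrow (by omega), par_row_nonpos hrow (by omega),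
        fbi_row_nonpos hrow (by omega), add_zero]

theorem fbi_self (u : Cell) : fbi S F B u u = 0 := by
  classical
  rw [fbi, if_neg]
  rintro (⟨hf, hb⟩ | ⟨hf, hb⟩) <;> exact hb.1 hf.1

/-- Parity step across any 4-adjacent (or equal) pair. -/
theorem par_step (hfin : S.Finite) (hrow : ∀ z ∈ cellsOf S, 1 ≤ z.1)
    (hF : IsCompOf F (fg S)) (hB : IsCompOf B (bgd S)) {u v : Cell} (h : u = v ∨ Adj4 u v) :
    par S F B u + par S F B v = fbi S F B u v := by
  have key : ∀ a b c : ZMod 2, b = a + c → a + b = c := by decide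
  have key2 : ∀ a b c : ZMod 2, a = b + c → a + b = c := by decide
  rcases h with rfl | h
  · rw [fbi_self]
    exact key _ _ _ (by rw [add_zero])
  rcases h with ⟨h1, h2 | h2⟩ | ⟨h1, h2 | h2⟩
  · -- u.1 = v.1, u.2 = v.2 + 1 : u is right of v
    have hv : u = (v.1, v.2 + 1) := Prod.ext (by omega) (by omega)
    rw [fbi_symm]
    rw [show v = (v.1, v.2) from rfl] at *
    rw [hv, add_comm]
    exact key _ _ _ (par_hstep hfin hrow hF hB v.1 v.2)
  · have hv : v = (u.1, u.2 + 1) := Prod.ext (by omega) (by omega)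
    rw [show u = (u.1, u.2) from rfl] at *
    rw [hv]
    exact key _ _ _ (par_hstep hfin hrow hF hB u.1 u.2)
  · have hv : u = (v.1 + 1, v.2) := Prod.ext (by omega) (by omega)
    rw [fbi_symm]
    rw [show v = (v.1, v.2) from rfl] at *
    rw [hv, add_comm]
    exact key _ _ _ (par_vstep hfin F B v.1 v.2)
  · have hv : v = (u.1 + 1, u.2) := Prod.ext (by omega) (by omega)
    rw [show u = (u.1, u.2) from rfl] at *
    rw [hv]
    exact key _ _ _ (par_vstep hfin F B u.1 u.2)

theorem fbi_eq_of_F (hu : u ∈ cellsF S F) (hv : v ∈ cellsF S F) (c : Cell) :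
    fbi S F B u c = fbi S F B c v := by
  classical
  unfold fbi
  refine if_congr ⟨?_, ?_⟩ rfl rfl
  · rintro (⟨_, hb⟩ | ⟨_, hb⟩)
    · exact Or.inr ⟨hv, hb⟩
    · exact absurd hu.1 hb.1
  · rintro (⟨_, hvB⟩ | ⟨_, hcB⟩)
    · exact absurd hv.1 hvB.1
    · exact Or.inl ⟨hu, hcB⟩

/-- Parity is constant on the cells of a foreground component. -/
theorem par_const_F (hfin : S.Finite) (hrow : ∀ z ∈ cellsOf S, 1 ≤ z.1)
    (hF : IsCompOf F (fg S)) (hB : IsCompOf B (bgd S)) {z w : Cell}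
    (hchain : Relation.ReflTransGen (Rel8 S F) z w) :
    par S F B z = par S F B w := by
  induction hchain with
  | refl => rfl
  | tail _ hstep ih =>
      rename_i b c _
      obtain ⟨hb, hc, hd1, hd2⟩ := hstep
      set m : Cell := (b.1, c.2) with hm
      have step1 : b = m ∨ Adj4 b m := by
        rcases eq_or_ne b.2 c.2 with he | he
        · exact Or.inl (Prod.ext rfl he)
        · refine Or.inr (Or.inl ⟨rfl, ?_⟩)
          rw [abs_le] at hd2
          simp only [hm]
          omega
      have step2 : m = c ∨ Adj4 m c := by
        rcases eq_or_ne b.1 c.1 with he | he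
        · exact Or.inl (Prod.ext he rfl)
        · refine Or.inr (Or.inr ⟨rfl, ?_⟩)
          rw [abs_le] at hd1
          simp only [hm]
          omega
      have e1 : par S F B b + par S F B m = fbi S F B b m := par_step hfin hrow hF hB step1
      have e2 : par S F B m + par S F B c = fbi S F B m c := par_step hfin hrow hF hB step2
      have efbi : fbi S F B b m = fbi S F B m c := fbi_eq_of_F hb hc m
      have key : ∀ p q r x : ZMod 2, p + q = x → q + r = x → p = r := by decide
      rw [ih]
      exact key _ _ _ _ e1 (efbi ▸ e2)

theorem fbi_both_B (hu : u ∈ cellsB S B) (hv : v ∈ cellsB S B) : fbi S F B u v = 0 := by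
  classical
  rw [fbi, if_neg]
  rintro (⟨hf, _⟩ | ⟨hf, _⟩)
  · exact hu.1 hf.1
  · exact hv.1 hf.1

/-- Parity is constant on the cells of a background component. -/
theorem par_const_B (hfin : S.Finite) (hrow : ∀ z ∈ cellsOf S, 1 ≤ z.1)
    (hF : IsCompOf F (fg S)) (hB : IsCompOf B (bgd S)) {z w : Cell}
    (hchain : Relation.ReflTransGen (Rel4 S B) z w) :
    par S F B z = par S F B w := by
  induction hchain with
  | refl => rfl
  | tail _ hstep ih =>
      rename_i b c _
      obtain ⟨hb, hc, hd⟩ := hstep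
      have e : par S F B b + par S F B c = fbi S F B b c := par_step hfin hrow hF hB (Or.inr hd)
      rw [fbi_both_B hb hc] at e
      have key : ∀ p q : ZMod 2, p + q = 0 → p = q := by decide
      rw [ih]
      exact key _ _ e

/-- Parity vanishes lexicographically before the minimum of the foreground component. -/
theorem par_vanish_F {q0 : Cell} (hq0min : ∀ u ∈ cellsF S F, ¬ lexLt u q0) {z : Cell}
    (hz : lexLt z q0) : par S F B z = 0 := by
  have : crossSet S F B z = ∅ := by
    rw [Set.eq_empty_iff_forall_notMem]
    rintro a ⟨ha, hP⟩
    have ha' : a < z.1 := ha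
    have hf : (((a, z.2) : Cell) ∈ cellsF S F) ∨ (((a + 1, z.2) : Cell) ∈ cellsF S F) := by
      rcases hP with ⟨hf, _⟩ | ⟨hf, _⟩
      · exact Or.inl hf
      · exact Or.inr hf
    have hzq : z.1 < q0.1 ∨ (z.1 = q0.1 ∧ z.2 < q0.2) := hz
    rcases hf with hf | hf
    · refine hq0min _ hf (Or.inl ?_)
      show a < q0.1
      omega
    · rcases hzq with h | ⟨h1, h2⟩
      · exact hq0min _ hf (Or.inl (show a + 1 < q0.1 by omega))
      · have : a + 1 < q0.1 ∨ a + 1 = q0.1 := by omega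
        rcases this with h' | h'
        · exact hq0min _ hf (Or.inl h')
        · exact hq0min _ hf (Or.inr ⟨h', show z.2 < q0.2 by omega⟩)
  rw [par, this, Set.ncard_empty]
  rfl

/-- Parity vanishes lexicographically before the minimum of the background component. -/
theorem par_vanish_B {h0 : Cell} (hh0min : ∀ u ∈ cellsB S B, ¬ lexLt u h0) {z : Cell}
    (hz : lexLt z h0) : par S F B z = 0 := by
  have : crossSet S F B z = ∅ := by
    rw [Set.eq_empty_iff_forall_notMem]
    rintro a ⟨ha, hP⟩
    have ha' : a < z.1 := ha
    have hf : (((a, z.2) : Cell) ∈ cellsB S B) ∨ (((a + 1, z.2) : Cell) ∈ cellsB S B) := by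
      rcases hP with ⟨_, hb⟩ | ⟨_, hb⟩
      · exact Or.inr hb
      · exact Or.inl hb
    have hzq : z.1 < h0.1 ∨ (z.1 = h0.1 ∧ z.2 < h0.2) := hz
    rcases hf with hf | hf
    · refine hh0min _ hf (Or.inl ?_)
      show a < h0.1
      omega
    · rcases hzq with h | ⟨h1, h2⟩
      · exact hh0min _ hf (Or.inl (show a + 1 < h0.1 by omega))
      · have : a + 1 < h0.1 ∨ a + 1 = h0.1 := by omega
        rcases this with h' | h'
        · exact hh0min _ hf (Or.inl h')
        · exact hh0min _ hf (Or.inr ⟨h', show z.2 < h0.2 by omega⟩)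
  rw [par, this, Set.ncard_empty]
  rfl

/-- MAIN separation theorem, foreground form: if a background component `B` is adjacent to
`F` and contains a cell lexicographically before the minimal cell of `F`, then `B` contains
the cell just above the minimal cell of `F`. -/
theorem main_F (hfin : S.Finite) (hrow : ∀ z ∈ cellsOf S, 1 ≤ z.1)
    (hF : IsCompOf F (fg S)) (hB : IsCompOf B (bgd S))
    {q0 : Cell} (hq0 : q0 ∈ cellsF S F) (hq0min : ∀ u ∈ cellsF S F, ¬ lexLt u q0)
    {f1 b1 : Cell} (hf1 : f1 ∈ cellsF S F) (hb1 : b1 ∈ cellsB S B) (hadj : Adj4 f1 b1)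
    {hb : Cell} (hhb : hb ∈ cellsB S B) (hlex : lexLt hb q0) :
    ((q0.1 - 1, q0.2) : Cell) ∈ cellsB S B := by
  classical
  by_contra hn0
  have hn0lex : lexLt ((q0.1 - 1, q0.2) : Cell) q0 := Or.inl (show q0.1 - 1 < q0.1 by omega)
  have hq0eq : ((q0.1 - 1 + 1, q0.2) : Cell) = q0 := by
    rw [show q0.1 - 1 + 1 = q0.1 by omega]
  have hv := par_vstep (F := F) (B := B) hfin (q0.1 - 1) q0.2
  rw [hq0eq] at hv
  have hfbi : fbi S F B (q0.1 - 1, q0.2) q0 = 0 := by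
    rw [fbi, if_neg]
    rintro (⟨hf, _⟩ | ⟨_, hb'⟩)
    · exact hq0min _ hf hn0lex
    · exact hn0 hb'
  rw [par_vanish_F hq0min hn0lex, hfbi, zero_add] at hv
  have h1 : par S F B f1 = par S F B q0 :=
    par_const_F hfin hrow hF hB (cellsF_conn hfin hF hf1 hq0)
  have h2 : par S F B b1 = par S F B hb :=
    par_const_B hfin hrow hF hB (cellsB_conn hB hb1 hhb)
  have h3 : par S F B hb = 0 := par_vanish_F hq0min hlex
  have h4 : par S F B f1 + par S F B b1 = fbi S F B f1 b1 :=
    par_step hfin hrow hF hB (Or.inr hadj)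
  have h5 : fbi S F B f1 b1 = 1 := by rw [fbi, if_pos (Or.inl ⟨hf1, hb1⟩)]
  rw [h1, hv, h2, h3, h5] at h4
  exact absurd h4 (by decide)

/-- MAIN separation theorem, background form. -/
theorem main_B (hfin : S.Finite) (hrow : ∀ z ∈ cellsOf S, 1 ≤ z.1)
    (hF : IsCompOf F (fg S)) (hB : IsCompOf B (bgd S))
    {h0 : Cell} (hh0 : h0 ∈ cellsB S B) (hh0min : ∀ u ∈ cellsB S B, ¬ lexLt u h0)
    {f1 b1 : Cell} (hf1 : f1 ∈ cellsF S F) (hb1 : b1 ∈ cellsB S B) (hadj : Adj4 f1 b1)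
    {qf : Cell} (hqf : qf ∈ cellsF S F) (hlex : lexLt qf h0) :
    ((h0.1 - 1, h0.2) : Cell) ∈ cellsF S F := by
  classical
  by_contra hx0
  have hx0lex : lexLt ((h0.1 - 1, h0.2) : Cell) h0 := Or.inl (show h0.1 - 1 < h0.1 by omega)
  have hh0eq : ((h0.1 - 1 + 1, h0.2) : Cell) = h0 := by
    rw [show h0.1 - 1 + 1 = h0.1 by omega]
  have hv := par_vstep (F := F) (B := B) hfin (h0.1 - 1) h0.2
  rw [hh0eq] at hv
  have hfbi : fbi S F B (h0.1 - 1, h0.2) h0 = 0 := by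
    rw [fbi, if_neg]
    rintro (⟨hf, _⟩ | ⟨hf', _⟩)
    · exact hx0 hf
    · exact hh0.1 hf'.1
  rw [par_vanish_B hh0min hx0lex, hfbi, zero_add] at hv
  have h1 : par S F B f1 = par S F B qf :=
    par_const_F hfin hrow hF hB (cellsF_conn hfin hF hf1 hqf)
  have h2 : par S F B b1 = par S F B h0 :=
    par_const_B hfin hrow hF hB (cellsB_conn hB hb1 hh0)
  have h3 : par S F B qf = 0 := par_vanish_B hh0min hlex
  have h4 : par S F B f1 + par S F B b1 = fbi S F B f1 b1 :=
    par_step hfin hrow hF hB (Or.inr hadj)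
  have h5 : fbi S F B f1 b1 = 1 := by rw [fbi, if_pos (Or.inl ⟨hf1, hb1⟩)]
  rw [h1, h3, h2, hv, h5] at h4
  exact absurd h4 (by decide)

end CGT

/-! ### §6 Topological adjacency vs discrete adjacency -/

namespace CGT

variable {S : Set (ℕ × ℕ)} {F B : Set Plane}

/-- From a topological touching, extract a 4-adjacent discrete pair. -/
theorem discrete_of_touch (hF : IsCompOf F (fg S)) (hB : IsCompOf B (bgd S))
    (h : (F ∩ closure B).Nonempty) :
    ∃ f b : Cell, f ∈ cellsF S F ∧ b ∈ cellsB S B ∧ Adj4 f b := by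
  obtain ⟨x, hxF, hxB⟩ := h
  -- find a B-cell whose pixel contains x
  have hδ : 0 < min (marg (x 0)) (marg (x 1)) := lt_min (marg_pos _) (marg_pos _)
  obtain ⟨y, hyB, hxy⟩ := Metric.mem_closure_iff.1 hxB _ hδ
  have h0 : |y 0 - x 0| < marg (x 0) := by
    have := dist_le_pi_dist x y 0
    rw [Real.dist_eq] at this
    rw [abs_sub_comm]
    exact lt_of_le_of_lt this (lt_of_lt_of_le hxy (min_le_left _ _))
  have h1 : |y 1 - x 1| < marg (x 1) := by
    have := dist_le_pi_dist x y 1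
    rw [Real.dist_eq] at this
    rw [abs_sub_comm]
    exact lt_of_le_of_lt this (lt_of_lt_of_le hxy (min_le_right _ _))
  obtain ⟨b0, hxb0, hyb0⟩ := near_cell h0 h1
  have hb0 : b0 ∈ cellsB S B := cell_mem_cellsB hB hyB hyb0
  -- find an F-cell whose pixel contains x
  have hxF' := hxF
  rw [F_eq_iUnion_cellsF hF] at hxF'
  simp only [Set.mem_iUnion, exists_prop] at hxF'
  obtain ⟨f0, hf0, hxf0⟩ := hxF'
  -- Chebyshev distance at most 1
  obtain ⟨hc1, hc2⟩ := pix_inter_iff.1 ⟨x, hxf0, hxb0⟩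
  -- build a 4-adjacent pair through the intermediate cell
  by_cases hg : ((f0.1, b0.2) : Cell) ∈ cellsOf S
  · -- intermediate is foreground
    have hcf : ((f0.1, b0.2) : Cell) ∈ cellsF S F :=
      mem_cellsF_of_adj hF hf0 hg (by simp) (by simpa using hc2)
    refine ⟨(f0.1, b0.2), b0, hcf, hb0, ?_⟩
    have hne : f0.1 ≠ b0.1 := by
      intro he
      have heq : b0 = ((f0.1, b0.2) : Cell) := Prod.ext he.symm rfl
      rw [heq] at hb0
      exact hb0.1 hcf.1
    right
    refine ⟨rfl, ?_⟩
    show f0.1 = b0.1 + 1 ∨ b0.1 = f0.1 + 1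
    rw [abs_le] at hc1
    omega
  · -- intermediate is background
    have hcb : ((f0.1, b0.2) : Cell) ∈ cellsB S B := by
      rcases eq_or_ne f0.1 b0.1 with he | hne
      · rw [show ((f0.1, b0.2) : Cell) = b0 from Prod.ext he rfl]
        exact hb0
      · refine mem_cellsB_of_adj4 hB hb0 hg ?_
        right
        refine ⟨rfl, ?_⟩
        rw [abs_le] at hc1
        omega
    refine ⟨f0, (f0.1, b0.2), hf0, hcb, ?_⟩
    have hne : f0.2 ≠ b0.2 := by
      intro he
      exact hcb.1 (by rw [show ((f0.1, b0.2) : Cell) = f0 from Prod.ext rfl he.symm]; exact hf0.1)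
    left
    refine ⟨rfl, ?_⟩
    show f0.2 = b0.2 + 1 ∨ b0.2 = f0.2 + 1
    rw [abs_le] at hc2
    omega

/-- From a 4-adjacent discrete pair, produce a topological touching. -/
theorem touch_of_discrete {f b : Cell} (hf : f ∈ cellsF S F) (hb : b ∈ cellsB S B)
    (hadj : Adj4 f b) : (F ∩ closure B).Nonempty := by
  obtain ⟨m, hmf, hmb, _⟩ := exists_border_pt hadj
  refine ⟨m, hf.2 hmf, ?_⟩
  rw [Metric.mem_closure_iff]
  intro ε hε
  -- the point a little inside pixel b along the segment to the center
  have hctr : dist m (ctr b) + 1 > 0 := by positivity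
  set t : ℝ := min 1 (ε / (2 * (dist m (ctr b) + 1))) with ht
  have ht0 : 0 < t := lt_min one_pos (by positivity)
  have ht1 : t ≤ 1 := min_le_left _ _
  have hs : SIn ((1 - t) • m + t • ctr b) b := sin_combo hmb ht0 ht1
  refine ⟨(1 - t) • m + t • ctr b, hb.2 ⟨hs.mem_pixZ, notMem_fg_of_sin hb.1 hs⟩, ?_⟩
  have : m - ((1 - t) • m + t • ctr b) = t • (m - ctr b) := by
    rw [smul_sub, sub_smul, one_smul]
    abel
  rw [dist_eq_norm, this, norm_smul]
  have h2 : ‖m - ctr b‖ = dist m (ctr b) := (dist_eq_norm m (ctr b)).symm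
  rw [h2, Real.norm_eq_abs, abs_of_pos ht0]
  have hle : t ≤ ε / (2 * (dist m (ctr b) + 1)) := min_le_right _ _
  have hd : dist m (ctr b) < dist m (ctr b) + 1 := by linarith
  have hd0 : 0 ≤ dist m (ctr b) := dist_nonneg
  calc t * dist m (ctr b) ≤ (ε / (2 * (dist m (ctr b) + 1))) * dist m (ctr b) :=
        mul_le_mul_of_nonneg_right hle dist_nonneg
    _ < ε := by
        rw [div_mul_eq_mul_div, div_lt_iff₀ (by positivity)]
        nlinarith
end CGT

/-! ### §7 Assembly: box, root component, ranks -/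

namespace CGT

/-- In the grid box. -/
def InBox (hh ww : ℕ) (z : Cell) : Prop :=
  1 ≤ z.1 ∧ z.1 ≤ (hh : ℤ) ∧ 1 ≤ z.2 ∧ z.2 ≤ (ww : ℤ)

variable {S : Set (ℕ × ℕ)} {hh ww : ℕ}

theorem S_finite (hS : OnGrid S hh ww) : S.Finite :=
  Set.Finite.subset ((Set.finite_Icc 1 hh).prod (Set.finite_Icc 1 ww)) hS

theorem cells_inBox (hS : OnGrid S hh ww) : ∀ z ∈ cellsOf S, InBox hh ww z := by
  rintro z ⟨p, hp, rfl⟩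
  have h := hS hp
  simp only [Set.mem_prod, Set.mem_Icc] at h
  refine ⟨?_, ?_, ?_, ?_⟩ <;> simp <;> [exact_mod_cast h.1.1; exact_mod_cast h.1.2;
    exact_mod_cast h.2.1; exact_mod_cast h.2.2]

theorem row_ge (hS : OnGrid S hh ww) : ∀ z ∈ cellsOf S, 1 ≤ z.1 :=
  fun z hz => (cells_inBox hS z hz).1

theorem outside_notMem (hS : OnGrid S hh ww) {z : Cell} (hz : ¬ InBox hh ww z) :
    z ∉ cellsOf S := fun h => hz (cells_inBox hS z h)

/-- The root (unbounded) background component. -/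
def Broot (S : Set (ℕ × ℕ)) : Set Plane := connectedComponentIn (bgd S) (ctr (0, 0))

theorem origin_notMem (hS : OnGrid S hh ww) : ((0, 0) : Cell) ∉ cellsOf S :=
  outside_notMem hS (by unfold InBox; omega)

theorem ctr_origin_mem_bgd (hS : OnGrid S hh ww) : ctr (0, 0) ∈ bgd S :=
  notMem_fg_of_sin (origin_notMem hS) (sin_ctr _)

theorem Broot_isCompOf (hS : OnGrid S hh ww) : IsCompOf (Broot S) (bgd S) :=
  ⟨ctr (0, 0), ctr_origin_mem_bgd hS, rfl⟩

theorem origin_mem_cellsB (hS : OnGrid S hh ww) : ((0, 0) : Cell) ∈ cellsB S (Broot S) :=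
  cell_mem_cellsB (Broot_isCompOf hS) (mem_connectedComponentIn (ctr_origin_mem_bgd hS))
    (sin_ctr _).mem_pixZ

/-- Chains of cells along a column. -/
theorem vert_chain (hS : OnGrid S hh ww) {j a : ℤ} (ha : ((a, j) : Cell) ∈ cellsB S (Broot S))
    (b : ℤ) (hcond : ∀ k : ℤ, min a b ≤ k → k ≤ max a b → ¬ InBox hh ww (k, j)) :
    ((b, j) : Cell) ∈ cellsB S (Broot S) := by
  have hB := Broot_isCompOf hS
  have up : ∀ n : ℕ, (∀ k : ℤ, a ≤ k → k ≤ a + n → ¬ InBox hh ww (k, j)) →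
      ((a + n, j) : Cell) ∈ cellsB S (Broot S) := by
    intro n
    induction n with
    | zero => intro _; simpa using ha
    | succ k ih =>
        intro hcnd
        have h1 : ((a + k, j) : Cell) ∈ cellsB S (Broot S) :=
          ih (fun t h1 h2 => hcnd t h1 (by omega))
        have h2 : ((a + k + 1, j) : Cell) ∉ cellsOf S :=
          outside_notMem hS (hcnd (a + k + 1) (by omega) (by push_cast; omega))
        have := mem_cellsB_of_adj4 hB h1 h2 (Or.inr ⟨rfl, Or.inr rfl⟩)
        convert this using 2
        push_cast
        ring
  have down : ∀ n : ℕ, (∀ k : ℤ, a - n ≤ k → k ≤ a → ¬ InBox hh ww (k, j)) →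
      ((a - n, j) : Cell) ∈ cellsB S (Broot S) := by
    intro n
    induction n with
    | zero => intro _; simpa using ha
    | succ k ih =>
        intro hcnd
        have h1 : ((a - k, j) : Cell) ∈ cellsB S (Broot S) :=
          ih (fun t h1 h2 => hcnd t (by omega) h2)
        have h2 : ((a - k - 1, j) : Cell) ∉ cellsOf S :=
          outside_notMem hS (hcnd (a - k - 1) (by push_cast; omega) (by omega))
        have := mem_cellsB_of_adj4 hB h1 h2 (Or.inr ⟨rfl, Or.inl (by omega)⟩)
        convert this using 2
        push_cast
        ring
  rcases le_total a b with hab | hab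
  · obtain ⟨n, rfl⟩ : ∃ n : ℕ, b = a + n := ⟨(b - a).toNat, by omega⟩
    exact up n (fun k h1 h2 => hcond k (by omega) (by omega))
  · obtain ⟨n, rfl⟩ : ∃ n : ℕ, b = a - n := ⟨(a - b).toNat, by omega⟩
    exact down n (fun k h1 h2 => hcond k (by omega) (by omega))

/-- Chains of cells along a row. -/
theorem horiz_chain (hS : OnGrid S hh ww) {i a : ℤ} (ha : ((i, a) : Cell) ∈ cellsB S (Broot S))
    (b : ℤ) (hcond : ∀ k : ℤ, min a b ≤ k → k ≤ max a b → ¬ InBox hh ww (i, k)) :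
    ((i, b) : Cell) ∈ cellsB S (Broot S) := by
  have hB := Broot_isCompOf hS
  have up : ∀ n : ℕ, (∀ k : ℤ, a ≤ k → k ≤ a + n → ¬ InBox hh ww (i, k)) →
      ((i, a + n) : Cell) ∈ cellsB S (Broot S) := by
    intro n
    induction n with
    | zero => intro _; simpa using ha
    | succ k ih =>
        intro hcnd
        have h1 : ((i, a + k) : Cell) ∈ cellsB S (Broot S) :=
          ih (fun t h1 h2 => hcnd t h1 (by omega))
        have h2 : ((i, a + k + 1) : Cell) ∉ cellsOf S :=
          outside_notMem hS (hcnd (a + k + 1) (by omega) (by push_cast; omega))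
        have := mem_cellsB_of_adj4 hB h1 h2 (Or.inl ⟨rfl, Or.inr rfl⟩)
        convert this using 2
        push_cast
        ring
  have down : ∀ n : ℕ, (∀ k : ℤ, a - n ≤ k → k ≤ a → ¬ InBox hh ww (i, k)) →
      ((i, a - n) : Cell) ∈ cellsB S (Broot S) := by
    intro n
    induction n with
    | zero => intro _; simpa using ha
    | succ k ih =>
        intro hcnd
        have h1 : ((i, a - k) : Cell) ∈ cellsB S (Broot S) :=
          ih (fun t h1 h2 => hcnd t (by omega) h2)
        have h2 : ((i, a - k - 1) : Cell) ∉ cellsOf S :=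
          outside_notMem hS (hcnd (a - k - 1) (by push_cast; omega) (by omega))
        have := mem_cellsB_of_adj4 hB h1 h2 (Or.inl ⟨rfl, Or.inl (by omega)⟩)
        convert this using 2
        push_cast
        ring
  rcases le_total a b with hab | hab
  · obtain ⟨n, rfl⟩ : ∃ n : ℕ, b = a + n := ⟨(b - a).toNat, by omega⟩
    exact up n (fun k h1 h2 => hcond k (by omega) (by omega))
  · obtain ⟨n, rfl⟩ : ∃ n : ℕ, b = a - n := ⟨(a - b).toNat, by omega⟩
    exact down n (fun k h1 h2 => hcond k (by omega) (by omega))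

/-- All cells outside the box belong to the root background component. -/
theorem outside_cellsB (hS : OnGrid S hh ww) {z : Cell} (hz : ¬ InBox hh ww z) :
    z ∈ cellsB S (Broot S) := by
  have h00 := origin_mem_cellsB hS
  by_cases hcol : z.2 ≤ (ww : ℤ)
  · -- route via column 0 then row z.1
    have h1 : ((z.1, 0) : Cell) ∈ cellsB S (Broot S) :=
      vert_chain hS h00 z.1 (fun k _ _ => by unfold InBox; omega)
    by_cases hrow1 : 1 ≤ z.1 ∧ z.1 ≤ (hh : ℤ)
    · -- then z.2 < 1
      have hz2 : z.2 < 1 := by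
        by_contra hcon
        exact hz ⟨hrow1.1, hrow1.2, by omega, hcol⟩
      have h2 : ((z.1, z.2) : Cell) ∈ cellsB S (Broot S) :=
        horiz_chain hS h1 z.2 (fun k hk1 hk2 => by unfold InBox; omega)
      simpa using h2
    · -- whole row z.1 is outside
      push_neg at hrow1
      have h2 : ((z.1, z.2) : Cell) ∈ cellsB S (Broot S) :=
        horiz_chain hS h1 z.2 (fun k _ _ => by unfold InBox; omega)
      simpa using h2
  · -- z.2 > ww : route via row 0 then column z.2
    push_neg at hcol
    have h1 : ((0, z.2) : Cell) ∈ cellsB S (Broot S) :=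
      horiz_chain hS h00 z.2 (fun k _ _ => by unfold InBox; omega)
    have h2 : ((z.1, z.2) : Cell) ∈ cellsB S (Broot S) :=
      vert_chain hS h1 z.1 (fun k _ _ => by unfold InBox; omega)
    simpa using h2

/-- Cells of a non-root background component lie in the box. -/
theorem cellsB_inBox (hS : OnGrid S hh ww) {B : Set Plane} (hB : IsCompOf B (bgd S))
    (hne : B ≠ Broot S) : ∀ z ∈ cellsB S B, InBox hh ww z := by
  intro z hz
  by_contra hout
  have h1 := outside_cellsB hS hout
  exact hne (hB.eq_of_meet (Broot_isCompOf hS)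
    ⟨ctr z, hz.2 (ctr_mem_piece hz.1), h1.2 (ctr_mem_piece h1.1)⟩)

theorem cellsF_nonempty {F : Set Plane} (hF : IsCompOf F (fg S)) :
    (cellsF S F).Nonempty := by
  obtain ⟨x, hx⟩ := hF.nonempty
  have h := hx
  rw [F_eq_iUnion_cellsF hF] at h
  simp only [Set.mem_iUnion, exists_prop] at h
  obtain ⟨z, hz, _⟩ := h
  exact ⟨z, hz⟩

theorem cellsB_nonempty {B : Set Plane} (hB : IsCompOf B (bgd S)) :
    (cellsB S B).Nonempty := by
  obtain ⟨x, hx⟩ := hB.nonempty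
  obtain ⟨z, hz⟩ := exists_cell x
  exact ⟨z, cell_mem_cellsB hB hx hz⟩

/-- Existence of lexicographic minima of finite nonempty cell sets. -/
theorem exists_lexmin {T : Set Cell} (hT : T.Finite) (hne : T.Nonempty) :
    ∃ m ∈ T, ∀ u ∈ T, ¬ lexLt u m := by
  obtain ⟨m, hm, hmin⟩ := Set.exists_min_image T (fun z => (toLex z : ℤ ×ₗ ℤ)) hT hne
  refine ⟨m, hm, fun u hu hlt => ?_⟩
  have h1 : (toLex u : ℤ ×ₗ ℤ) < toLex m := by
    rw [Prod.Lex.lt_iff]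
    exact hlt
  exact absurd (hmin u hu) (not_le_of_gt h1)

/-- Numeric encoding of cells, lex-monotone on the box. -/
def encC (ww : ℕ) (z : Cell) : ℕ := (z.1 * ((ww : ℤ) + 2) + z.2).toNat

theorem encC_lt {u v : Cell} (hu : InBox hh ww u) (hv : InBox hh ww v) (h : lexLt u v) :
    encC ww u < encC ww v := by
  obtain ⟨hu1, hu2, hu3, hu4⟩ := hu
  obtain ⟨hv1, hv2, hv3, hv4⟩ := hv
  have key : u.1 * ((ww : ℤ) + 2) + u.2 < v.1 * ((ww : ℤ) + 2) + v.2 := by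
    rcases h with h | ⟨h1, h2⟩
    · have step : (u.1 + 1) * ((ww : ℤ) + 2) ≤ v.1 * ((ww : ℤ) + 2) :=
        mul_le_mul_of_nonneg_right (by omega) (by positivity)
      nlinarith
    · rw [h1]; omega
  have hA : 0 ≤ u.1 * ((ww : ℤ) + 2) := mul_nonneg (by omega) (by positivity)
  have hB : 0 ≤ v.1 * ((ww : ℤ) + 2) := mul_nonneg (by omega) (by positivity)
  unfold encC
  omega

theorem encC_inj {u v : Cell} (hu : InBox hh ww u) (hv : InBox hh ww v)
    (h : encC ww u = encC ww v) : u = v := by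
  by_contra hne
  have htri : lexLt u v ∨ lexLt v u := by
    unfold lexLt
    rcases Prod.ext_iff.not.1 hne with h'
    omega
  rcases htri with h' | h'
  · exact absurd h (Nat.ne_of_lt (encC_lt hu hv h'))
  · exact absurd h.symm (Nat.ne_of_lt (encC_lt hv hu h'))

end CGT

/-! ### §8 Abstract graph lemmas -/

namespace CGT

open SimpleGraph

/-- The last step of a walk of positive length. -/
theorem exists_last_adj {V' : Type*} {G' : SimpleGraph V'} {a b : V'} (q : G'.Walk a b)
    (hq : q.length ≠ 0) : ∃ x, G'.Adj x b ∧ x ∈ q.support ∧ s(x, b) ∈ q.edges := by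
  induction q with
  | nil => simp at hq
  | @cons u' v' w' h' q' ih =>
      rcases Nat.eq_zero_or_pos q'.length with h0 | h0
      · have hvw : v' = w' := Walk.eq_of_length_eq_zero h0
        subst hvw
        exact ⟨u', h', Walk.start_mem_support _, by simp [Walk.edges_cons]⟩
      · obtain ⟨x, h1, h2, h3⟩ := ih (by omega)
        refine ⟨x, h1, ?_, ?_⟩
        · rw [Walk.support_cons]
          exact List.mem_cons_of_mem _ h2
        · rw [Walk.edges_cons]
          exact List.mem_cons_of_mem _ h3

/-- A graph in which every vertex has at most one neighbour of smaller rank (with injective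
rank) is acyclic. -/
theorem acyclic_of_unique_parent {V' : Type*} {G' : SimpleGraph V'} (rk : V' → ℕ)
    (hinj : ∀ u v : V', rk u = rk v → u = v)
    (huniq : ∀ v p q : V', G'.Adj v p → G'.Adj v q → rk p < rk v → rk q < rk v → p = q) :
    G'.IsAcyclic := by
  classical
  intro v c hc
  -- pick the vertex of maximal rank on the cycle
  rcases hargm : c.support.argmax rk with _ | m
  · exact absurd (List.argmax_eq_none.1 hargm) c.support_ne_nil
  have hm : m ∈ c.support.argmax rk := hargm
  have hm_mem : m ∈ c.support := List.argmax_mem hm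
  have hmax : ∀ x ∈ c.support, rk x ≤ rk m := fun x hx => List.le_of_mem_argmax hx hm
  have hc' : (c.rotate m hm_mem).IsCycle := hc.rotate hm_mem
  have hsup' : ∀ x ∈ (c.rotate m hm_mem).support, rk x ≤ rk m := by
    intro x hx
    rw [Walk.support_eq_cons] at hx
    rcases List.mem_cons.1 hx with rfl | hx'
    · exact le_refl _
    · have hrot := Walk.support_rotate c m hm_mem
      have : x ∈ c.support.tail := hrot.mem_iff.1 hx'
      exact hmax x (by rw [Walk.support_eq_cons c]; exact List.mem_cons_of_mem _ this)
  generalize hgen : c.rotate m hm_mem = c' at hc' hsup'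
  clear hgen
  have hlen : 3 ≤ c'.length := hc'.three_le_length
  cases c' with
  | nil => simp at hlen
  | @cons _ v₁ _ hadj q =>
      have hlenq : q.length ≠ 0 := by
        simp only [Walk.length_cons] at hlen
        omega
      obtain ⟨x, hxadj, hxsup, hxedge⟩ := exists_last_adj q hlenq
      have hnodup := hc'.isCircuit.isTrail.edges_nodup
      rw [Walk.edges_cons, List.nodup_cons] at hnodup
      have hv₁x : v₁ ≠ x := by
        rintro rfl
        exact hnodup.1 (by rwa [Sym2.eq_swap] at hxedge)
      have hv₁m : v₁ ≠ m := fun h => (hadj.ne (h ▸ rfl)).elim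
      have hxm : x ≠ m := hxadj.ne
      have hv₁sup : v₁ ∈ (Walk.cons hadj q).support := by
        rw [Walk.support_cons]
        exact List.mem_cons_of_mem _ (Walk.start_mem_support q)
      have hxsup' : x ∈ (Walk.cons hadj q).support := by
        rw [Walk.support_cons]
        exact List.mem_cons_of_mem _ hxsup
      have hr1 : rk v₁ < rk m :=
        lt_of_le_of_ne (hsup' _ hv₁sup) (fun h => hv₁m (hinj _ _ h))
      have hr2 : rk x < rk m :=
        lt_of_le_of_ne (hsup' _ hxsup') (fun h => hxm (hinj _ _ h))
      exact hv₁x (huniq m v₁ x hadj hxadj.symm hr1 hr2)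

/-- A graph in which every non-root vertex has a parent of smaller rank is connected. -/
theorem connected_of_parent {V' : Type*} {G' : SimpleGraph V'} (rk : V' → ℕ) (root : V')
    (hparent : ∀ v : V', v ≠ root → ∃ p : V', G'.Adj v p ∧ (p = root ∨ rk p < rk v)) :
    G'.Connected := by
  have key : ∀ n : ℕ, ∀ v : V', rk v = n → G'.Reachable root v := by
    intro n
    induction n using Nat.strong_induction_on with
    | _ n ih =>
        intro v hv
        by_cases hroot : v = root
        · subst hroot; exact Reachable.refl _
        · obtain ⟨p, hadj, hp⟩ := hparent v hroot
          rcases hp with rfl | hp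
          · exact (hadj.reachable).symm
          · exact ((ih (rk p) (hv ▸ hp) p rfl).trans hadj.reachable.symm : _)
  rw [connected_iff]
  exact ⟨fun u v => ((key (rk u) u rfl).symm.trans (key (rk v) v rfl)), ⟨root⟩⟩

end CGT

/-! ### §9 The component graph is a tree -/

namespace CGT

variable {S : Set (ℕ × ℕ)} {hh ww : ℕ}

/-- Vertex type of the component graph. -/
abbrev Vx (S : Set (ℕ × ℕ)) :=
  {C : Set Plane // IsCompOf C (fg S)} ⊕ {C : Set Plane // IsCompOf C ((fg S)ᶜ)}

/-- Cells of a vertex. -/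
def vcells (S : Set (ℕ × ℕ)) : Vx S → Set Cell :=
  Sum.elim (fun F => cellsF S F.1) (fun B => cellsB S B.1)

noncomputable def rootV (hS : OnGrid S hh ww) : Vx S :=
  Sum.inr ⟨Broot S, Broot_isCompOf hS⟩

open Classical in
noncomputable def rankV (hS : OnGrid S hh ww) : Vx S → ℕ :=
  fun v => if v = rootV hS then 0 else sInf (encC ww '' vcells S v) + 1

theorem lex_trichotomy (u m : Cell) : lexLt u m ∨ u = m ∨ lexLt m u := by
  unfold lexLt
  rcases lt_trichotomy u.1 m.1 with h | h | h
  · exact Or.inl (Or.inl h)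
  · rcases lt_trichotomy u.2 m.2 with h2 | h2 | h2
    · exact Or.inl (Or.inr ⟨h, h2⟩)
    · exact Or.inr (Or.inl (Prod.ext h h2))
    · exact Or.inr (Or.inr (Or.inr ⟨h.symm, h2⟩))
  · exact Or.inr (Or.inr (Or.inl h))

theorem vcells_nonempty (v : Vx S) : (vcells S v).Nonempty := by
  cases v with
  | inl F => exact cellsF_nonempty F.2
  | inr B => exact cellsB_nonempty B.2

theorem vcells_disjoint {u v : Vx S} (hne : u ≠ v) {z : Cell} (hu : z ∈ vcells S u)
    (hv : z ∈ vcells S v) : False := by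
  cases u with
  | inl F =>
      cases v with
      | inl F' =>
          have : F.1 = F'.1 := F.2.eq_of_meet F'.2
            ⟨ctr z, hu.2 (sin_ctr z).mem_pixZ, hv.2 (sin_ctr z).mem_pixZ⟩
          exact hne (by rw [Sum.inl.injEq]; exact Subtype.ext this)
      | inr B => exact hv.1 hu.1
  | inr B =>
      cases v with
      | inl F => exact hu.1 hv.1
      | inr B' =>
          have : B.1 = B'.1 := B.2.eq_of_meet B'.2
            ⟨ctr z, hu.2 (ctr_mem_piece hu.1), hv.2 (ctr_mem_piece hv.1)⟩
          exact hne (by rw [Sum.inr.injEq]; exact Subtype.ext this)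

theorem vcells_inBox (hS : OnGrid S hh ww) {v : Vx S} (hv : v ≠ rootV hS) :
    ∀ z ∈ vcells S v, InBox hh ww z := by
  cases v with
  | inl F => exact fun z hz => cells_inBox hS z hz.1
  | inr B =>
      have hBne : B.1 ≠ Broot S := by
        intro h
        exact hv (by rw [rootV, Sum.inr.injEq]; exact Subtype.ext h)
      exact fun z hz => cellsB_inBox hS B.2 hBne z hz

theorem vcells_finite (hS : OnGrid S hh ww) {v : Vx S} (hv : v ≠ rootV hS) :
    (vcells S v).Finite := by
  have hbox : {z : Cell | InBox hh ww z}.Finite := by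
    have : {z : Cell | InBox hh ww z} = Set.Icc ((1 : ℤ), (1 : ℤ)) ((hh : ℤ), (ww : ℤ)) := by
      ext z
      simp only [Set.mem_setOf_eq, Set.mem_Icc, Prod.le_def, InBox]
      tauto
    rw [this]
    exact Set.finite_Icc _ _
  exact hbox.subset (fun z hz => vcells_inBox hS hv z hz)

theorem exists_minV (hS : OnGrid S hh ww) {v : Vx S} (hv : v ≠ rootV hS) :
    ∃ m ∈ vcells S v, (∀ u ∈ vcells S v, ¬ lexLt u m) ∧ rankV hS v = encC ww m + 1 := by
  obtain ⟨m, hm, hmin⟩ := exists_lexmin (vcells_finite hS hv) (vcells_nonempty v)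
  refine ⟨m, hm, hmin, ?_⟩
  rw [rankV, if_neg hv]
  congr 1
  have hne : (encC ww '' vcells S v).Nonempty := ⟨_, Set.mem_image_of_mem _ hm⟩
  obtain ⟨u₀, hu₀, hequ⟩ := Nat.sInf_mem hne
  have hle : encC ww m ≤ encC ww u₀ := by
    rcases lex_trichotomy u₀ m with h | h | h
    · exact absurd h (hmin u₀ hu₀)
    · rw [h]
    · exact (encC_lt (vcells_inBox hS hv m hm) (vcells_inBox hS hv u₀ hu₀) h).le
  have hge : sInf (encC ww '' vcells S v) ≤ encC ww m :=
    Nat.sInf_le (Set.mem_image_of_mem _ hm)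
  omega

theorem rankV_root (hS : OnGrid S hh ww) : rankV hS (rootV hS) = 0 := by
  rw [rankV, if_pos rfl]

theorem rankV_inj (hS : OnGrid S hh ww) : ∀ u v : Vx S, rankV hS u = rankV hS v → u = v := by
  intro u v h
  by_cases hu : u = rootV hS <;> by_cases hv : v = rootV hS
  · rw [hu, hv]
  · exfalso
    obtain ⟨m, _, _, he⟩ := exists_minV hS hv
    rw [hu, he] at h
    rw [rankV, if_pos rfl] at h
    omega
  · exfalso
    obtain ⟨m, _, _, he⟩ := exists_minV hS hu
    rw [hv, he] at h
    rw [rankV, if_pos rfl] at h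
    omega
  · obtain ⟨m1, hm1, _, he1⟩ := exists_minV hS hu
    obtain ⟨m2, hm2, _, he2⟩ := exists_minV hS hv
    have henc : encC ww m1 = encC ww m2 := by omega
    have hmm : m1 = m2 :=
      encC_inj (vcells_inBox hS hu m1 hm1) (vcells_inBox hS hv m2 hm2) henc
    by_contra hne
    exact vcells_disjoint hne hm1 (hmm ▸ hm2)

/-- Every non-root vertex has a parent. -/
theorem parentV (hS : OnGrid S hh ww) : ∀ v : Vx S, v ≠ rootV hS →
    ∃ p : Vx S, (componentGraph S).Adj v p ∧ (p = rootV hS ∨ rankV hS p < rankV hS v) := by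
  intro v hv
  cases v with
  | inl F =>
      obtain ⟨q0, hq0, hq0min, hrk⟩ := exists_minV hS hv
      have hn0lex : lexLt ((q0.1 - 1, q0.2) : Cell) q0 := Or.inl (show q0.1 - 1 < q0.1 by omega)
      have habs1 : |q0.1 - (q0.1 - 1)| ≤ 1 := by rw [abs_le]; omega
      have habs2 : |q0.2 - q0.2| ≤ 1 := by simp
      have hn0cells : ((q0.1 - 1, q0.2) : Cell) ∉ cellsOf S := by
        intro hmem
        exact hq0min _ (mem_cellsF_of_adj F.2 hq0 hmem habs1 habs2) hn0lex
      have hctr : ctr (q0.1 - 1, q0.2) ∈ bgd S := notMem_fg_of_sin hn0cells (sin_ctr _)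
      have hBp : IsCompOf (connectedComponentIn (bgd S) (ctr (q0.1 - 1, q0.2))) (bgd S) :=
        ⟨_, hctr, rfl⟩
      have hn0B : ((q0.1 - 1, q0.2) : Cell) ∈
          cellsB S (connectedComponentIn (bgd S) (ctr (q0.1 - 1, q0.2))) :=
        cell_mem_cellsB hBp (mem_connectedComponentIn hctr) (sin_ctr _).mem_pixZ
      refine ⟨Sum.inr ⟨_, hBp⟩, ?_, ?_⟩
      · show (F.1 ∩ closure (connectedComponentIn (bgd S) (ctr (q0.1 - 1, q0.2)))).Nonempty
        exact touch_of_discrete hq0 hn0B (Or.inr ⟨rfl, Or.inl (by omega)⟩)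
      · by_cases hproot : (Sum.inr ⟨_, hBp⟩ : Vx S) = rootV hS
        · exact Or.inl hproot
        · refine Or.inr ?_
          obtain ⟨mp, hmp, hmpmin, hrkp⟩ := exists_minV hS hproot
          have h1 : encC ww mp ≤ encC ww ((q0.1 - 1, q0.2) : Cell) := by
            rcases lex_trichotomy ((q0.1 - 1, q0.2) : Cell) mp with h | h | h
            · exact absurd h (hmpmin _ hn0B)
            · exact le_of_eq (by rw [h])
            · exact (encC_lt (vcells_inBox hS hproot mp hmp)
                (vcells_inBox hS hproot _ hn0B) h).le
          have h2 : encC ww ((q0.1 - 1, q0.2) : Cell) < encC ww q0 :=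
            encC_lt (vcells_inBox hS hproot _ hn0B) (cells_inBox hS q0 hq0.1) hn0lex
          rw [hrk, hrkp]
          omega
  | inr B =>
      obtain ⟨h0, hh0, hh0min, hrk⟩ := exists_minV hS hv
      have hx0lex : lexLt ((h0.1 - 1, h0.2) : Cell) h0 := Or.inl (show h0.1 - 1 < h0.1 by omega)
      have hx0cells : ((h0.1 - 1, h0.2) : Cell) ∈ cellsOf S := by
        by_contra hmem
        exact hh0min _ (mem_cellsB_of_adj4 B.2 hh0 hmem (Or.inr ⟨rfl, Or.inl (by omega)⟩)) hx0lex
      have hctr : ctr (h0.1 - 1, h0.2) ∈ fg S := pixZ_subset_fg hx0cells (sin_ctr _).mem_pixZ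
      have hFp : IsCompOf (connectedComponentIn (fg S) (ctr (h0.1 - 1, h0.2))) (fg S) :=
        ⟨_, hctr, rfl⟩
      have hx0F : ((h0.1 - 1, h0.2) : Cell) ∈
          cellsF S (connectedComponentIn (fg S) (ctr (h0.1 - 1, h0.2))) :=
        ⟨hx0cells, (isPreconnected_pixZ _).subset_connectedComponentIn
          (sin_ctr _).mem_pixZ (pixZ_subset_fg hx0cells)⟩
      refine ⟨Sum.inl ⟨_, hFp⟩, ?_, Or.inr ?_⟩
      · show (connectedComponentIn (fg S) (ctr (h0.1 - 1, h0.2)) ∩ closure B.1).Nonempty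
        exact touch_of_discrete hx0F hh0 (Or.inr ⟨rfl, Or.inr (by omega)⟩)
      · have hpne : (Sum.inl ⟨_, hFp⟩ : Vx S) ≠ rootV hS := by simp [rootV]
        obtain ⟨mp, hmp, hmpmin, hrkp⟩ := exists_minV hS hpne
        have h1 : encC ww mp ≤ encC ww ((h0.1 - 1, h0.2) : Cell) := by
          rcases lex_trichotomy ((h0.1 - 1, h0.2) : Cell) mp with h | h | h
          · exact absurd h (hmpmin _ hx0F)
          · exact le_of_eq (by rw [h])
          · exact (encC_lt (cells_inBox hS mp hmp.1) (cells_inBox hS _ hx0cells) h).le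
        have h2 : encC ww ((h0.1 - 1, h0.2) : Cell) < encC ww h0 :=
          encC_lt (cells_inBox hS _ hx0cells) (vcells_inBox hS hv h0 hh0) hx0lex
        rw [hrk, hrkp]
        omega

/-- Uniqueness of the smaller-rank neighbour. -/
theorem uniqueV (hS : OnGrid S hh ww) : ∀ v p q : Vx S,
    (componentGraph S).Adj v p → (componentGraph S).Adj v q →
    rankV hS p < rankV hS v → rankV hS q < rankV hS v → p = q := by
  have hfin := S_finite hS
  have hrow := row_ge hS
  intro v p q hp hq hrp hrq
  have hvroot : v ≠ rootV hS := by
    intro h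
    rw [h, rankV_root hS] at hrp
    omega
  cases v with
  | inl F =>
      cases p with
      | inl F' => exact hp.elim
      | inr B1 =>
        cases q with
        | inl F' => exact hq.elim
        | inr B2 =>
          obtain ⟨q0, hq0, hq0min, hrk⟩ := exists_minV hS hvroot
          have hq0box := cells_inBox hS q0 hq0.1
          have small : ∀ (Bv : {C : Set Plane // IsCompOf C ((fg S)ᶜ)}),
              (componentGraph S).Adj (Sum.inl F) (Sum.inr Bv) →
              rankV hS (Sum.inr Bv) < rankV hS (Sum.inl F) →
              ((q0.1 - 1, q0.2) : Cell) ∈ cellsB S Bv.1 := by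
            intro Bv hadj hrank
            obtain ⟨f1, b1, hf1, hb1, hadj4⟩ := discrete_of_touch F.2 Bv.2 hadj
            by_cases hroot : (Sum.inr Bv : Vx S) = rootV hS
            · have hBr : Bv.1 = Broot S := by
                rw [rootV] at hroot
                have := Sum.inr_injective hroot
                exact Subtype.ext_iff.1 this
              have hbcell : ((0, 0) : Cell) ∈ cellsB S Bv.1 := by
                rw [hBr]; exact origin_mem_cellsB hS
              have hlex : lexLt ((0, 0) : Cell) q0 := Or.inl (by
                show (0 : ℤ) < q0.1
                have := hq0box.1
                omega)
              exact main_F hfin hrow F.2 Bv.2 hq0 hq0min hf1 hb1 hadj4 hbcell hlex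
            · obtain ⟨mB, hmB, _, hrkB⟩ := exists_minV hS hroot
              have hlt : encC ww mB < encC ww q0 := by
                rw [hrk, hrkB] at hrank
                omega
              have hlex : lexLt mB q0 := by
                rcases lex_trichotomy mB q0 with h | h | h
                · exact h
                · rw [h] at hlt; omega
                · have := encC_lt hq0box (vcells_inBox hS hroot mB hmB) h
                  omega
              exact main_F hfin hrow F.2 Bv.2 hq0 hq0min hf1 hb1 hadj4 hmB hlex
          have h1 := small B1 hp hrp
          have h2 := small B2 hq hrq
          have : B1.1 = B2.1 := B1.2.eq_of_meet B2.2
            ⟨ctr _, h1.2 (ctr_mem_piece h1.1), h2.2 (ctr_mem_piece h2.1)⟩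
          rw [Sum.inr.injEq]
          exact Subtype.ext this
  | inr B =>
      cases p with
      | inr B' => exact hp.elim
      | inl F1 =>
        cases q with
        | inr B' => exact hq.elim
        | inl F2 =>
          obtain ⟨h0, hh0, hh0min, hrk⟩ := exists_minV hS hvroot
          have hh0box := vcells_inBox hS hvroot h0 hh0
          have small : ∀ (Fv : {C : Set Plane // IsCompOf C (fg S)}),
              (componentGraph S).Adj (Sum.inr B) (Sum.inl Fv) →
              rankV hS (Sum.inl Fv) < rankV hS (Sum.inr B) →
              ((h0.1 - 1, h0.2) : Cell) ∈ cellsF S Fv.1 := by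
            intro Fv hadj hrank
            obtain ⟨f1, b1, hf1, hb1, hadj4⟩ := discrete_of_touch Fv.2 B.2 hadj
            have hFvne : (Sum.inl Fv : Vx S) ≠ rootV hS := by simp [rootV]
            obtain ⟨mF, hmF, _, hrkF⟩ := exists_minV hS hFvne
            have hlt : encC ww mF < encC ww h0 := by
              rw [hrk, hrkF] at hrank
              omega
            have hlex : lexLt mF h0 := by
              rcases lex_trichotomy mF h0 with h | h | h
              · exact h
              · rw [h] at hlt; omega
              · have := encC_lt hh0box (cells_inBox hS mF hmF.1) h
                omega
            exact main_B hfin hrow Fv.2 B.2 hh0 hh0min hf1 hb1 hadj4 hmF hlex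
          have h1 := small F1 hp hrp
          have h2 := small F2 hq hrq
          have : F1.1 = F2.1 := F1.2.eq_of_meet F2.2
            ⟨ctr _, h1.2 (sin_ctr _).mem_pixZ, h2.2 (sin_ctr _).mem_pixZ⟩
          rw [Sum.inl.injEq]
          exact Subtype.ext this

end CGT

/-- For every binary image `S`, the component graph of `S` is a tree. -/
theorem componentGraph_isTree
    (h w : ℕ) (S : Set (ℕ × ℕ)) (hS : OnGrid S h w) :
    (componentGraph S).IsTree := by
  constructor
  · exact CGT.connected_of_parent (CGT.rankV hS) (CGT.rootV hS) (CGT.parentV hS)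
  · exact CGT.acyclic_of_unique_parent (CGT.rankV hS) (CGT.rankV_inj hS) (CGT.uniqueV hS)

end
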